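/- arXiv:2304.10230 — 6 statements merged into one kernel-verified Lean document; each statement's English description precedes it below -/
import Mathlib

section
/- For any nonempty reduced word w in a free group F and any nonzero integer s, the root of w^s equals root(w) if s > 0 and root(w)^{-1} if s < 0, and exp(w^s) = |s| · exp(w). -/
namespace RootExpAux
open List

variable {γ : Type*}

/-- `n`-fold concatenation of a list. -/
def npowL (t : List γ) (n : ℕ) : List γ := (List.replicate n t).flatten

@[simp] lemma npowL_zero (t : List γ) : npowL t 0 = [] := rfl

lemma npowL_succ (t : List γ) (n : ℕ) : npowL t (n+1) = t ++ npowL t n := by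
  simp [npowL, List.replicate_succ]

lemma npowL_succ' (t : List γ) (n : ℕ) : npowL t (n+1) = npowL t n ++ t := by
  induction n with
  | zero => simp [npowL]
  | succ n ih =>
    rw [npowL_succ t (n+1)]
    conv_lhs => rw [ih]
    conv_rhs => rw [npowL_succ]
    simp

@[simp] lemma npowL_one (t : List γ) : npowL t 1 = t := by simp [npowL]

@[simp] lemma length_npowL (t : List γ) (n : ℕ) : (npowL t n).length = n * t.length := by
  induction n with
  | zero => simp
  | succ n ih => rw [npowL_succ]; simp [ih]; ring

@[simp] lemma npowL_nil (n : ℕ) : npowL ([] : List γ) n = [] := by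
  have := length_npowL ([] : List γ) n
  exact List.length_eq_zero_iff.mp (by simpa using this)

/-- `w` has period `p`. -/
def HasPeriod (w : List γ) (p : ℕ) : Prop := ∀ i : ℕ, i + p < w.length → w[i]? = w[i + p]?

lemma hasPeriod_of_overlap {w a t b : List γ} {p : ℕ} (h1 : w = a ++ t) (h2 : w = t ++ b)
    (ha : a.length = p) (hb : b.length = p) : HasPeriod w p := by
  intro i hi
  have hlen : w.length = t.length + p := by rw [h2]; simp [hb]
  have hit : i < t.length := by omega
  have e1 : w[i]? = t[i]? := by rw [h2]; exact List.getElem?_append_left hit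
  have e2 : w[i+p]? = t[i]? := by
    rw [h1]
    have hle : a.length ≤ i + p := by omega
    rw [List.getElem?_append_right hle]
    congr 1; omega
  rw [e1, e2]

lemma hasPeriod_sub {w : List γ} {p q : ℕ} (hp : HasPeriod w p) (hq : HasPeriod w q)
    (hpq : p ≤ q) (hlen : p + q ≤ w.length) : HasPeriod w (q - p) := by
  intro i hi
  rcases le_or_gt p i with hip | hip
  · have e1 : w[i-p]? = w[i]? := by
      have h' := hp (i-p) (by omega); rwa [show i - p + p = i by omega] at h'
    have e2 : w[i-p]? = w[i + (q-p)]? := by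
      have h' := hq (i-p) (by omega); rwa [show i - p + q = i + (q-p) by omega] at h'
    rw [← e1, e2]
  · have e1 : w[i]? = w[i+q]? := hq i (by omega)
    have e2 : w[i + (q-p)]? = w[i+q]? := by
      have h' := hp (i + (q-p)) (by omega)
      rwa [show i + (q-p) + p = i + q by omega] at h'
    rw [e1, e2]

/-- Fine–Wilf. -/
lemma hasPeriod_gcd : ∀ (n : ℕ) {w : List γ} {p q : ℕ}, p + q ≤ n → HasPeriod w p →
    HasPeriod w q → p + q ≤ w.length → HasPeriod w (Nat.gcd p q) := by
  intro n
  induction n using Nat.strong_induction_on with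
  | _ n ih =>
    intro w p q hn hp hq hlen
    rcases Nat.eq_zero_or_pos p with rfl | hp1
    · simpa using hq
    rcases Nat.eq_zero_or_pos q with rfl | hq1
    · simpa using hp
    rcases le_total p q with hpq | hqp
    · have hsub : HasPeriod w (q - p) := hasPeriod_sub hp hq hpq hlen
      have hg : Nat.gcd p (q - p) = Nat.gcd p q := by
        rw [Nat.gcd_comm p (q-p), Nat.gcd_comm p q, Nat.gcd_sub_self_left hpq]
      rw [← hg]
      exact ih (p + (q - p)) (by omega) (by omega) hp hsub (by omega)
    · have hsub : HasPeriod w (p - q) := hasPeriod_sub hq hp hqp (by omega)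
      have hg : Nat.gcd (p - q) q = Nat.gcd p q := by
        rw [Nat.gcd_comm (p-q) q, Nat.gcd_comm p q, Nat.gcd_sub_self_right hqp]
      rw [← hg]
      exact ih (p - q + q) (by omega) (by omega) hsub hq (by omega)

lemma hasPeriod_take {w : List γ} {p : ℕ} (h : HasPeriod w p) (k : ℕ) :
    HasPeriod (w.take k) p := by
  intro i hi
  have hlen : (w.take k).length = min k w.length := by simp
  have hik : i + p < k := by omega
  have hiw : i + p < w.length := by omega
  rw [List.getElem?_take, if_pos (by omega : i < k), List.getElem?_take, if_pos hik]
  exact h i hiw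

lemma hasPeriod_drop {w : List γ} {p : ℕ} (h : HasPeriod w p) (k : ℕ) :
    HasPeriod (w.drop k) p := by
  intro i hi
  have hlen : (w.drop k).length = w.length - k := by simp
  rw [List.getElem?_drop, List.getElem?_drop]
  have h' := h (k + i) (by omega)
  rwa [show k + i + p = k + (i + p) by omega] at h'

lemma eq_npowL_of_hasPeriod : ∀ (n : ℕ) (z : List γ) (g : ℕ), z.length ≤ n → HasPeriod z g →
    g ∣ z.length → z = npowL (z.take g) (z.length / g) := by
  intro n
  induction n using Nat.strong_induction_on with
  | _ n ih =>
    intro z g hn hper hdvd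
    rcases Nat.eq_zero_or_pos z.length with hz | hz
    · have hznil : z = [] := List.length_eq_zero_iff.mp hz
      subst hznil; simp
    have hg0 : g ≠ 0 := by
      rintro rfl
      exact absurd (Nat.eq_zero_of_zero_dvd hdvd) (by omega)
    have hgle : g ≤ z.length := Nat.le_of_dvd hz hdvd
    set z' := z.drop g with hz'
    have hlen' : z'.length = z.length - g := by simp [hz']
    rcases Nat.eq_zero_or_pos z'.length with h0 | h1
    · have hzg : z.length = g := by omega
      have ht : z.take g = z := List.take_of_length_le (by omega)
      rw [ht, hzg, Nat.div_self (by omega), npowL_one]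
    · have hdvd' : g ∣ z'.length := by
        rw [hlen']; exact Nat.dvd_sub hdvd dvd_rfl
      have hgle' : g ≤ z'.length := Nat.le_of_dvd h1 hdvd'
      have hper' : HasPeriod z' g := hasPeriod_drop hper g
      have hIH : z' = npowL (z'.take g) (z'.length / g) :=
        ih (z.length - 1) (by omega) z' g (by omega) hper' hdvd'
      have htake : z'.take g = z.take g := by
        apply List.ext_getElem?
        intro i
        rcases lt_or_ge i g with hig | hig
        · rw [List.getElem?_take, if_pos hig, List.getElem?_take, if_pos hig, hz',
            List.getElem?_drop]
          have h'' := (hper i (by omega)).symm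
          rwa [show i + g = g + i by omega] at h''
        · rw [List.getElem?_eq_none, List.getElem?_eq_none]
          · simp; omega
          · simp; omega
      obtain ⟨k, hk⟩ := hdvd
      rcases Nat.eq_zero_or_pos k with rfl | hk1
      · omega
      obtain ⟨k', rfl⟩ : ∃ k', k = k' + 1 := ⟨k - 1, by omega⟩
      have hk2 : z.length = g * k' + g := by rw [hk, Nat.mul_succ]
      have e0 : z'.length = g * k' := by omega
      have e1 : z'.length / g = k' := by
        rw [e0, Nat.mul_comm]; exact Nat.mul_div_cancel _ (by omega)
      have e2 : z.length / g = k' + 1 := by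
        rw [hk]; rw [Nat.mul_comm]; exact Nat.mul_div_cancel _ (by omega)
      rw [e2, npowL_succ]
      conv_lhs => rw [← List.take_append_drop g z]
      rw [← hz', hIH, htake, e1]

/-- Lyndon–Schützenberger: equal powers have a common root. -/
lemma exists_common_root_list {M N : List γ} {m r : ℕ} (hm : 1 ≤ m) (hr : 1 ≤ r)
    (h : npowL M m = npowL N r) : ∃ T p q, M = npowL T p ∧ N = npowL T q := by
  rcases eq_or_lt_of_le hm with hm1 | hm2
  · exact ⟨N, r, 1, by rw [← h, ← hm1, npowL_one], by rw [npowL_one]⟩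
  rcases eq_or_lt_of_le hr with hr1 | hr2
  · exact ⟨M, 1, m, by rw [npowL_one], by rw [h, ← hr1, npowL_one]⟩
  rcases eq_or_ne M [] with rfl | hM
  · refine ⟨[], 0, 0, by simp, ?_⟩
    have : (npowL N r).length = 0 := by rw [← h]; simp
    have : N.length = 0 := by
      rw [length_npowL] at this
      rcases Nat.mul_eq_zero.mp this with h' | h'; · omega
      · exact h'
    rw [List.length_eq_zero_iff.mp this]; simp
  rcases eq_or_ne N [] with rfl | hN
  · refine ⟨[], 0, 0, ?_, by simp⟩
    have : (npowL M m).length = 0 := by rw [h]; simp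
    have : M.length = 0 := by
      rw [length_npowL] at this
      rcases Nat.mul_eq_zero.mp this with h' | h'; · omega
      · exact h'
    rw [List.length_eq_zero_iff.mp this]; simp
  have hMl : 1 ≤ M.length := List.length_pos_iff.mpr hM
  have hNl : 1 ≤ N.length := List.length_pos_iff.mpr hN
  set w := npowL M m with hw
  have hwN : w = npowL N r := h
  have hlenM : w.length = m * M.length := by rw [hw, length_npowL]
  have hlenN : w.length = r * N.length := by rw [hwN, length_npowL]
  have hpM : HasPeriod w M.length := by
    apply hasPeriod_of_overlap (a := M) (t := npowL M (m-1)) (b := M) _ _ rfl rfl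
    · rw [hw, ← npowL_succ, show m - 1 + 1 = m by omega]
    · rw [hw, ← npowL_succ', show m - 1 + 1 = m by omega]
  have hpN : HasPeriod w N.length := by
    apply hasPeriod_of_overlap (a := N) (t := npowL N (r-1)) (b := N) _ _ rfl rfl
    · rw [hwN, ← npowL_succ, show r - 1 + 1 = r by omega]
    · rw [hwN, ← npowL_succ', show r - 1 + 1 = r by omega]
  have hsum : M.length + N.length ≤ w.length := by nlinarith
  set g := Nat.gcd M.length N.length with hg
  have hpg : HasPeriod w g := hasPeriod_gcd (M.length + N.length) le_rfl hpM hpN hsum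
  have hdM : g ∣ M.length := Nat.gcd_dvd_left _ _
  have hdN : g ∣ N.length := Nat.gcd_dvd_right _ _
  have hgM : g ≤ M.length := Nat.le_of_dvd (by omega) hdM
  have hgN : g ≤ N.length := Nat.le_of_dvd (by omega) hdN
  have hMw : M = w.take M.length := by
    rw [hw]
    conv_lhs => rw [← List.take_left (l₁ := M) (l₂ := npowL M (m-1))]
    rw [← npowL_succ, show m - 1 + 1 = m by omega]
  have hNw : N = w.take N.length := by
    rw [hwN]
    conv_lhs => rw [← List.take_left (l₁ := N) (l₂ := npowL N (r-1))]
    rw [← npowL_succ, show r - 1 + 1 = r by omega]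
  refine ⟨w.take g, M.length / g, N.length / g, ?_, ?_⟩
  · have hQ := eq_npowL_of_hasPeriod M.length M g le_rfl
      (by rw [hMw]; exact hasPeriod_take hpg _) hdM
    have htg : M.take g = w.take g := by
      rw [hMw, List.take_take, min_eq_left hgM]
    rwa [htg] at hQ
  · have hQ := eq_npowL_of_hasPeriod N.length N g le_rfl
      (by rw [hNw]; exact hasPeriod_take hpg _) hdN
    have htg : N.take g = w.take g := by
      rw [hNw, List.take_take, min_eq_left hgN]
    rwa [htg] at hQ


open FreeGroup

variable {α : Type} [DecidableEq α]

/-- the no-cancellation relation on letters -/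
def Rel (x y : α × Bool) : Prop := ¬(x.1 = y.1 ∧ x.2 = !y.2)

lemma chain'_reduce (L : List (α × Bool)) : Chain' (Rel (α := α)) (reduce L) := by
  induction L with
  | nil => exact List.isChain_nil
  | cons x L ih =>
    rw [reduce.cons]
    rcases hL : reduce L with _ | ⟨y, M⟩
    · exact List.isChain_singleton _
    · rw [hL] at ih
      dsimp only
      split_ifs with h
      · exact ih.tail
      · exact List.isChain_cons_cons.mpr ⟨h, ih⟩

lemma reduce_eq_self_of_chain' {L : List (α × Bool)} (h : Chain' (Rel (α := α)) L) :
    reduce L = L := by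
  induction L with
  | nil => rfl
  | cons x L ih =>
    rw [reduce.cons, ih h.tail]
    rcases L with _ | ⟨y, M⟩
    · rfl
    · dsimp only
      rw [if_neg (List.isChain_cons_cons.mp h).1]

lemma toWord_mk_of_chain' {L : List (α × Bool)} (h : Chain' (Rel (α := α)) L) :
    (mk L).toWord = L := by
  rw [toWord_mk, reduce_eq_self_of_chain' h]

lemma chain'_toWord (x : FreeGroup α) : Chain' (Rel (α := α)) x.toWord := by
  rw [← reduce_toWord]; exact chain'_reduce _

/-- cyclically reduced word -/
def Cyc (L : List (α × Bool)) : Prop := Chain' (Rel (α := α)) (L ++ L)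

lemma Cyc.chain' {L : List (α × Bool)} (h : Cyc L) : Chain' (Rel (α := α)) L :=
  h.prefix ⟨L, rfl⟩

lemma Cyc.junction {L : List (α × Bool)} (h : Cyc L) :
    ∀ a ∈ L.getLast?, ∀ b ∈ L.head?, Rel a b :=
  (List.isChain_append.mp h).2.2

lemma head?_npowL {L : List (α × Bool)} {n : ℕ} (hn : 1 ≤ n) : (npowL L n).head? = L.head? := by
  obtain ⟨k, rfl⟩ : ∃ k, n = k + 1 := ⟨n - 1, by omega⟩
  rcases L with _ | ⟨y, M⟩
  · simp
  · rw [npowL_succ]; simp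

lemma getLast?_npowL {L : List (α × Bool)} {n : ℕ} (hn : 1 ≤ n) :
    (npowL L n).getLast? = L.getLast? := by
  obtain ⟨k, rfl⟩ : ∃ k, n = k + 1 := ⟨n - 1, by omega⟩
  rcases eq_or_ne L [] with rfl | hL
  · simp
  · rw [npowL_succ']; exact List.getLast?_append_of_ne_nil _ hL

lemma chain'_npowL {L : List (α × Bool)} (h : Cyc L) (n : ℕ) :
    Chain' (Rel (α := α)) (npowL L n) := by
  induction n with
  | zero => exact List.isChain_nil
  | succ n ih =>
    rw [npowL_succ]
    refine List.isChain_append.mpr ⟨h.chain', ih, ?_⟩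
    intro a ha b hb
    rcases Nat.eq_zero_or_pos n with rfl | hn
    · simp at hb
    · rw [head?_npowL hn] at hb
      exact h.junction a ha b hb

lemma invRev_append' (X Y : List (α × Bool)) :
    invRev (X ++ Y) = invRev Y ++ invRev X := by
  simp [invRev]

lemma mk_npowL (L : List (α × Bool)) (n : ℕ) : mk (npowL L n) = (mk L) ^ n := by
  rw [pow_mk]; rfl

/-- words conjugate-decompose with cyclically reduced core -/
lemma exists_cyc_decomp : ∀ (n : ℕ) (L : List (α × Bool)), L.length ≤ n →
    Chain' (Rel (α := α)) L →
    ∃ D M, L = D ++ M ++ invRev D ∧ Cyc M ∧ (L ≠ [] → M ≠ []) := by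
  intro n
  induction n using Nat.strong_induction_on with
  | _ n ih =>
    intro L hn hch
    by_cases hc : Cyc L
    · exact ⟨[], L, by simp [invRev], hc, fun h => h⟩
    · have hjun : ¬ (∀ a ∈ L.getLast?, ∀ b ∈ L.head?, Rel a b) := by
        intro hj
        exact hc (List.isChain_append.mpr ⟨hch, hch, hj⟩)
      push_neg at hjun
      obtain ⟨a, ha, b, hb, hab⟩ := hjun
      rw [Rel] at hab
      push_neg at hab
      have haeq : a = (b.1, !b.2) := Prod.ext hab.1 hab.2
      rcases L with _ | ⟨x, T⟩
      · simp at hb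
      · have hxb : x = b := by simpa using hb
        subst hxb
        rcases T with _ | ⟨y, T'⟩
        · have : a = x := by simpa [eq_comm] using ha
          rw [this] at haeq
          have : x.2 = !x.2 := congrArg Prod.snd haeq
          simp at this
        · set T := y :: T' with hT
          have hTne : T ≠ [] := by simp [hT]
          have hgc : (x :: T).getLast? = T.getLast? := by
            rw [hT]; exact List.getLast?_cons_cons
          have haT : T.getLast? = some a := by
            rw [← hgc]; simpa using ha
          have hga : T.getLast hTne = a := by
            rw [List.getLast?_eq_getLast hTne] at haT; simpa using haT
          set M' := T.dropLast with hM'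
          have hTdec : T = M' ++ [a] := by
            rw [hM', ← hga]; exact (List.dropLast_append_getLast hTne).symm
          have hLdec : x :: T = [x] ++ M' ++ [a] := by rw [hTdec]; simp
          have hM'ne : M' ≠ [] := by
            intro h0
            rw [h0] at hLdec
            simp only [List.nil_append, List.singleton_append] at hLdec
            rw [hLdec] at hch
            have hrel : Rel x a := (List.isChain_cons_cons.mp hch).1
            rw [haeq] at hrel
            exact hrel ⟨rfl, by simp⟩
          have hch' : Chain' (Rel (α := α)) M' := by
            refine hch.infix ⟨[x], [a], ?_⟩
            rw [hLdec]
          have hlen : (x :: T).length = M'.length + 2 := by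
            rw [hLdec]; simp
          have hTlen : T.length = T'.length + 1 := by rw [hT]; rfl
          have hM'len : M'.length + 1 = T.length := by
            rw [hM', List.length_dropLast]; omega
          have hnn : (x :: T).length = T.length + 1 := by rfl
          obtain ⟨D₁, M, hdec1, hcyc1, hne1⟩ :=
            ih (n - 1) (by omega) M' (by omega) hch'
          refine ⟨x :: D₁, M, ?_, hcyc1, fun _ => hne1 hM'ne⟩
          have hinvb : invRev [x] = [a] := by rw [haeq]; simp [invRev]
          have hinv : invRev (x :: D₁) = invRev D₁ ++ [a] := by
            rw [show x :: D₁ = [x] ++ D₁ by simp, invRev_append', hinvb]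
          rw [hinv, hLdec, hdec1]
          simp

lemma toWord_decomp (x : FreeGroup α) :
    ∃ D M, x.toWord = D ++ M ++ invRev D ∧ Cyc M ∧ (x ≠ 1 → M ≠ []) := by
  obtain ⟨D, M, h1, h2, h3⟩ :=
    exists_cyc_decomp x.toWord.length x.toWord le_rfl (chain'_toWord x)
  exact ⟨D, M, h1, h2, fun hx => h3 (by simpa using hx)⟩

lemma toWord_pow_of_decomp {x : FreeGroup α} {D M : List (α × Bool)}
    (hx : x.toWord = D ++ M ++ invRev D) (hM : Cyc M) {r : ℕ} (hr : 1 ≤ r) :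
    (x ^ r).toWord = D ++ npowL M r ++ invRev D := by
  have hxe : x = mk D * mk M * (mk D)⁻¹ := by
    rw [inv_mk, mul_mk, mul_mk, ← hx, mk_toWord]
  have hpow : x ^ r = mk (D ++ npowL M r ++ invRev D) := by
    rw [hxe, conj_pow, ← mk_npowL, inv_mk, mul_mk, mul_mk]
  rw [hpow]
  apply toWord_mk_of_chain'
  have hch : Chain' (Rel (α := α)) (D ++ (M ++ invRev D)) := by
    have := chain'_toWord x
    rwa [hx, List.append_assoc] at this
  obtain ⟨hD, hMI, hjD⟩ := List.isChain_append.mp hch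
  obtain ⟨hM2, hID, hjMI⟩ := List.isChain_append.mp hMI
  rw [List.append_assoc]
  refine List.isChain_append.mpr ⟨hD, ?_, ?_⟩
  · refine List.isChain_append.mpr ⟨chain'_npowL hM r, hID, ?_⟩
    intro p hp q hq
    rw [getLast?_npowL hr] at hp
    exact hjMI p hp q hq
  · intro p hp q hq
    rw [List.head?_append, head?_npowL hr, ← List.head?_append] at hq
    exact hjD p hp q hq

lemma pow_ne_one {x : FreeGroup α} (hx : x ≠ 1) {n : ℕ} (hn : 1 ≤ n) : x ^ n ≠ 1 := by
  obtain ⟨D, M, h1, h2, h3⟩ := toWord_decomp x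
  have hM := h3 hx
  have htw := toWord_pow_of_decomp h1 h2 hn
  intro h0
  rw [h0] at htw
  simp only [toWord_one] at htw
  have hlen := congrArg List.length htw
  rw [List.length_append, List.length_append, length_npowL, invRev_length] at hlen
  simp only [toWord_one, List.length_nil] at hlen
  have hl : n * M.length = 0 := by omega
  rcases Nat.mul_eq_zero.mp hl with h' | h'
  · omega
  · exact hM (List.length_eq_zero_iff.mp h')

lemma pow_left_injective {x : FreeGroup α} (hx : x ≠ 1) {i j : ℕ} (h : x ^ i = x ^ j) :
    i = j := by
  rcases le_total i j with hij | hij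
  · by_contra hne
    have h1 : x ^ i * x ^ (j - i) = x ^ i * 1 := by
      rw [← pow_add, mul_one, show i + (j - i) = j by omega]; exact h.symm
    exact pow_ne_one hx (by omega) (mul_left_cancel h1)
  · by_contra hne
    have h1 : x ^ j * x ^ (i - j) = x ^ j * 1 := by
      rw [← pow_add, mul_one, show j + (i - j) = i by omega]; exact h
    exact pow_ne_one hx (by omega) (mul_left_cancel h1)

/-- Common root theorem in free groups. -/
lemma exists_common_root {u v : FreeGroup α} {m r : ℕ} (hm : 1 ≤ m) (hr : 1 ≤ r)
    (h : u ^ m = v ^ r) : ∃ z : FreeGroup α, (∃ p, u = z ^ p) ∧ ∃ q, v = z ^ q := by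
  rcases eq_or_ne u 1 with rfl | hu
  · have hv : v = 1 := by
      by_contra hv
      exact pow_ne_one hv hr (by rw [← h]; simp)
    exact ⟨1, ⟨1, by simp⟩, ⟨1, by simp [hv]⟩⟩
  have hv : v ≠ 1 := by
    rintro rfl
    exact pow_ne_one hu hm (by rw [h]; simp)
  -- conjugate u to a cyclically reduced element
  obtain ⟨C, Mu, hdec, hcyc, hne⟩ := toWord_decomp u
  set c : FreeGroup α := mk C with hc
  set u₀ : FreeGroup α := mk Mu with hu₀
  have hMu : Mu ≠ [] := hne hu
  have huconj : u = c * u₀ * c⁻¹ := by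
    rw [hc, hu₀, inv_mk, mul_mk, mul_mk, ← hdec, mk_toWord]
  set v₁ : FreeGroup α := c⁻¹ * v * c with hv₁
  have hv₁ne : v₁ ≠ 1 := by
    intro h0
    apply hv
    have h1 : c⁻¹ * v * c = 1 := hv₁.symm.trans h0
    have h2 := congrArg (fun t => c * t * c⁻¹) h1
    simpa [mul_assoc] using h2
  have hpow : u₀ ^ m = v₁ ^ r := by
    have e1 : u ^ m = c * u₀ ^ m * c⁻¹ := by rw [huconj, conj_pow]
    have e2 : v₁ ^ r = c⁻¹ * v ^ r * c := by
      rw [hv₁, show c⁻¹ * v * c = c⁻¹ * v * c⁻¹⁻¹ by rw [inv_inv], conj_pow, inv_inv]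
    have e3 : u₀ ^ m = c⁻¹ * v ^ r * c := by
      rw [← h, e1]; simp [mul_assoc]
    exact e3.trans e2.symm
  have htu₀ : u₀.toWord = Mu := toWord_mk_of_chain' hcyc.chain'
  have htu₀dec : u₀.toWord = [] ++ Mu ++ invRev [] := by simpa using htu₀
  have htwU : (u₀ ^ m).toWord = npowL Mu m := by
    have := toWord_pow_of_decomp htu₀dec hcyc hm
    simpa using this
  obtain ⟨D, N, hdecv, hcycv, hnev⟩ := toWord_decomp v₁
  have hN : N ≠ [] := hnev hv₁ne
  have htwV : (v₁ ^ r).toWord = D ++ npowL N r ++ invRev D := toWord_pow_of_decomp hdecv hcycv hr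
  have hWeq : npowL Mu m = D ++ npowL N r ++ invRev D := by
    rw [← htwU, ← htwV, hpow]
  have hD : D = [] := by
    rcases D with _ | ⟨d, D'⟩
    · rfl
    exfalso
    have hhead : (npowL Mu m).head? = some d := by
      rw [hWeq]; simp
    have hlast : (npowL Mu m).getLast? = some (d.1, !d.2) := by
      rw [hWeq]
      rw [List.append_assoc]
      rw [List.getLast?_append_of_ne_nil _ (List.append_ne_nil_of_right_ne_nil _ (by simp [invRev]))]
      rw [List.getLast?_append_of_ne_nil _ (by simp [invRev] : invRev (d :: D') ≠ [])]
      rw [show d :: D' = [d] ++ D' by simp, invRev_append']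
      rcases eq_or_ne (invRev D') [] with h0 | h0
      · rw [h0]; simp [invRev]
      · rw [List.getLast?_append_of_ne_nil _ (by simp [invRev] : invRev [d] ≠ [])]
        simp [invRev]
    rw [getLast?_npowL hm, head?_npowL hm] at *
    have := hcyc.junction (d.1, !d.2) (by rw [hlast]; rfl) d (by rw [hhead]; rfl)
    exact this ⟨rfl, by simp⟩
  rw [hD] at hWeq hdecv
  simp only [invRev_empty, List.append_nil, List.nil_append] at hWeq hdecv
  obtain ⟨T, p, q, hMT, hNT⟩ := exists_common_root_list hm hr (by rw [hWeq])
  refine ⟨c * mk T * c⁻¹, ⟨p, ?_⟩, ⟨q, ?_⟩⟩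
  · rw [conj_pow, huconj, hu₀, hMT, mk_npowL]
  · rw [conj_pow, ← mk_npowL, ← hNT]
    have : v₁ = mk N := by rw [← hdecv, mk_toWord]
    rw [← this, hv₁]
    simp [mul_assoc]

end RootExpAux

/-- In a group, `u` is the root and `e` the exponent of `w`:
`w = u ^ e` with `e ≥ 1` maximal among all ways of writing `w` as a power. -/
def IsRootExp {G : Type} [Group G] (w u : G) (e : ℕ) : Prop :=
  1 ≤ e ∧ w = u ^ e ∧ ∀ (v : G) (r : ℕ), w = v ^ r → r ≤ e

theorem root_exp_of_zpow (α : Type) (w u : FreeGroup α) (e : ℕ) (s : ℤ)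
    (hw : w ≠ 1) (h : IsRootExp w u e) (hs : s ≠ 0) :
    IsRootExp (w ^ s) (if 0 < s then u else u⁻¹) (s.natAbs * e) := by
  letI : DecidableEq α := Classical.decEq α
  obtain ⟨he1, hwe, hmax⟩ := h
  have hu1 : u ≠ 1 := by rintro rfl; rw [one_pow] at hwe; exact hw hwe
  set a : FreeGroup α := if 0 < s then u else u⁻¹ with ha
  have ha1 : a ≠ 1 := by
    rw [ha]; split_ifs <;> simpa using hu1
  have hm1 : 1 ≤ s.natAbs * e := Nat.mul_pos (by omega) he1
  have hkey : w ^ s = a ^ (s.natAbs * e) := by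
    rw [hwe, ha]
    rcases lt_or_ge 0 s with hpos | hneg
    · rw [if_pos hpos, show s = (s.natAbs : ℤ) by omega, zpow_natCast, ← pow_mul,
        Nat.mul_comm e s.natAbs]
      simp [Int.natAbs_abs]
    · rw [if_neg (by omega), show s = -(s.natAbs : ℤ) by omega, zpow_neg, zpow_natCast,
        ← pow_mul, ← inv_pow, Nat.mul_comm e s.natAbs]
      simp [Int.natAbs_abs]
  refine ⟨hm1, hkey, ?_⟩
  intro v r hvr
  rcases Nat.eq_zero_or_pos r with rfl | hr1
  · omega
  have hvne : v ≠ 1 := by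
    rintro rfl
    rw [hkey] at hvr
    exact RootExpAux.pow_ne_one ha1 hm1 (by rw [hvr]; simp)
  have hvr' : a ^ (s.natAbs * e) = v ^ r := by rw [← hkey]; exact hvr
  obtain ⟨z, ⟨p, hzp⟩, ⟨q, hzq⟩⟩ := RootExpAux.exists_common_root hm1 hr1 hvr'
  have hp1 : 1 ≤ p := by
    rcases Nat.eq_zero_or_pos p with rfl | h'
    · rw [pow_zero] at hzp; exact absurd hzp ha1
    · exact h'
  have hq1 : 1 ≤ q := by
    rcases Nat.eq_zero_or_pos q with rfl | h'
    · rw [pow_zero] at hzq; exact absurd hzq hvne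
    · exact h'
  have hple : p * e ≤ e := by
    rcases lt_or_ge 0 s with hpos | hneg
    · have hua : u = a := by rw [ha, if_pos hpos]
      exact hmax z (p * e) (by rw [hwe, hua, hzp, ← pow_mul])
    · have hua : u = a⁻¹ := by rw [ha, if_neg (by omega), inv_inv]
      exact hmax z⁻¹ (p * e) (by rw [hwe, hua, hzp, ← inv_pow, ← pow_mul])
  have hp : p = 1 := by
    by_contra hp2
    have h2 : 2 * e ≤ p * e := Nat.mul_le_mul_right e (by omega)
    omega
  have hza : a = z := by rw [hzp, hp, pow_one]
  have hvq : v = a ^ q := by rw [hzq, hza]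
  have hmeq : s.natAbs * e = q * r := by
    apply RootExpAux.pow_left_injective ha1
    rw [hvr', hvq, ← pow_mul]
  have hrle : r ≤ q * r := Nat.le_mul_of_pos_left r (by omega)
  omega
end

section
/- If w is a nontrivial element of a free group and w = v^s for some nonzero integer s, then v is a power of root(w), i.e., v = root(w)^k for some nonzero integer k. -/
namespace PowerRoot
variable {β : Type*}

/-- `n`-th power of a word in the free monoid of lists. -/
def npow (W : List β) (n : ℕ) : List β := (List.replicate n W).flatten

lemma npow_zero (W : List β) : npow W 0 = [] := rfl

lemma npow_succ (W : List β) (n : ℕ) : npow W (n + 1) = W ++ npow W n := by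
  simp [npow, List.replicate_succ]

lemma npow_add (W : List β) (m n : ℕ) : npow W (m + n) = npow W m ++ npow W n := by
  induction m with
  | zero => simp [npow_zero]
  | succ k ih => rw [Nat.succ_add, npow_succ, ih, npow_succ, List.append_assoc]

lemma npow_succ' (W : List β) (n : ℕ) : npow W (n + 1) = npow W n ++ W := by
  rw [npow_add]; simp [npow_succ, npow_zero]

lemma length_npow (W : List β) (n : ℕ) : (npow W n).length = n * W.length := by
  induction n with
  | zero => simp [npow_zero]
  | succ k ih => rw [npow_succ, List.length_append, ih]; ring

lemma npow_ne_nil {W : List β} (hW : W ≠ []) {n : ℕ} (hn : 1 ≤ n) : npow W n ≠ [] := by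
  obtain ⟨k, rfl⟩ := Nat.exists_eq_add_of_le hn
  rw [Nat.add_comm, npow_succ]
  simp [hW]

lemma eq_nil_of_npow {W : List β} {n : ℕ} (hn : 1 ≤ n) (h : npow W n = []) : W = [] := by
  by_contra hW
  exact npow_ne_nil hW hn h

lemma head?_npow {W : List β} {n : ℕ} (hn : 1 ≤ n) : (npow W n).head? = W.head? := by
  obtain ⟨k, rfl⟩ := Nat.exists_eq_add_of_le hn
  rw [Nat.add_comm, npow_succ]
  cases W with
  | nil => simp [npow]
  | cons a t => simp

lemma getLast?_npow {W : List β} {n : ℕ} (hn : 1 ≤ n) : (npow W n).getLast? = W.getLast? := by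
  obtain ⟨k, rfl⟩ := Nat.exists_eq_add_of_le hn
  rw [Nat.add_comm, npow_succ']
  cases eq_or_ne W [] with
  | inl h => simp [h, npow_zero, npow]
  | inr h => exact List.getLast?_append_of_ne_nil _ h

lemma npow_prefix {W : List β} {a b : ℕ} (h : a ≤ b) : npow W a <+: npow W b := by
  obtain ⟨c, rfl⟩ := Nat.exists_eq_add_of_le h
  rw [npow_add]; exact List.prefix_append _ _

lemma prefix_of_prefix_append {L A B : List β} (h : L <+: A ++ B) (hl : L.length ≤ A.length) :
    L <+: A := by
  have h1 : L = (A ++ B).take L.length := by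
    obtain ⟨t, ht⟩ := h
    rw [← ht, List.take_append_of_le_length (le_refl L.length), List.take_length]
  rw [h1, List.take_append_of_le_length hl]
  exact List.take_prefix _ _

section Comm
variable {W : List β}

lemma comm_drop {Z L : List β} (hZ : Z ++ W = W ++ Z) (hL : L ++ W = W ++ L)
    (hpre : Z <+: L) : ∃ L', L = Z ++ L' ∧ L' ++ W = W ++ L' := by
  obtain ⟨L', rfl⟩ := hpre
  refine ⟨L', rfl, List.append_cancel_left (as := Z) ?_⟩
  rw [← List.append_assoc, hL, ← List.append_assoc, ← hZ, List.append_assoc]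

lemma comm_prefix_aux (hL : L ++ W = W ++ L) : ∀ k, L <+: npow W k ++ L := by
  intro k
  induction k with
  | zero => simp [npow_zero]
  | succ n ih =>
    have hbase : L <+: W ++ L := by rw [← hL]; exact List.prefix_append _ _
    calc L <+: W ++ L := hbase
    _ <+: W ++ (npow W n ++ L) := (List.prefix_append_right_inj W).2 ih
    _ = npow W (n+1) ++ L := by rw [npow_succ, List.append_assoc]

lemma comm_prefix_npow (hW : W ≠ []) (hL : L ++ W = W ++ L) : L <+: npow W L.length := by
  have h1 := comm_prefix_aux hL L.length
  have h2 : L.length ≤ (npow W L.length).length := by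
    rw [length_npow]
    have : 1 ≤ W.length := by
      cases W with
      | nil => exact absurd rfl hW
      | cons a t => simp
    nlinarith
  exact prefix_of_prefix_append h1 h2

/-- Any two words commuting with a fixed nonempty word are powers of a common word. -/
theorem exists_common_root (hW : W ≠ []) {L₁ L₂ : List β}
    (h1 : L₁ ++ W = W ++ L₁) (h2 : L₂ ++ W = W ++ L₂) :
    ∃ Z a b, L₁ = npow Z a ∧ L₂ = npow Z b := by
  classical
  set P : ℕ → Prop := fun n => ∃ L : List β, L ++ W = W ++ L ∧ L ≠ [] ∧ L.length = n with hP
  have hex : ∃ n, P n := ⟨W.length, W, rfl, hW, rfl⟩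
  obtain ⟨Z, hZc, hZne, hZlen⟩ := Nat.find_spec hex
  suffices hall : ∀ n (L : List β), L.length = n → L ++ W = W ++ L → ∃ k, L = npow Z k by
    obtain ⟨a, ha⟩ := hall _ L₁ rfl h1
    obtain ⟨b, hb⟩ := hall _ L₂ rfl h2
    exact ⟨Z, a, b, ha, hb⟩
  intro n
  induction n using Nat.strong_induction_on with
  | _ n ih =>
    intro L hlen hLc
    rcases eq_or_ne L [] with rfl | hLne
    · exact ⟨0, rfl⟩
    · have hmin : Nat.find hex ≤ L.length := Nat.find_min' hex ⟨L, hLc, hLne, rfl⟩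
      rw [← hZlen] at hmin
      have hZpre : Z <+: L := by
        have pZ : Z <+: npow W Z.length := comm_prefix_npow hW hZc
        have pL : L <+: npow W L.length := comm_prefix_npow hW hLc
        have pZ' : Z <+: npow W L.length := pZ.trans (npow_prefix hmin)
        exact List.prefix_of_prefix_length_le pZ' pL hmin
      obtain ⟨L', rfl, hL'c⟩ := comm_drop hZc hLc hZpre
      have hlt : L'.length < n := by
        have h1 : 1 ≤ Z.length := List.length_pos_iff.2 hZne
        rw [← hlen, List.length_append]; omega
      obtain ⟨k, hk⟩ := ih _ hlt L' rfl hL'c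
      exact ⟨k + 1, by rw [hk]; exact (npow_succ _ _).symm⟩

/-- Two words with a common (nontrivial) power are powers of a common word. -/
theorem common_root_of_pow_eq {L₁ L₂ : List β} {e m : ℕ} (he : 1 ≤ e) (hm : 1 ≤ m)
    (h : npow L₁ e = npow L₂ m) :
    ∃ Z a b, L₁ = npow Z a ∧ L₂ = npow Z b := by
  rcases eq_or_ne L₁ [] with rfl | h1
  · have hnil : L₂ = [] := eq_nil_of_npow hm (by rw [← h]; simp [npow])
    subst hnil; exact ⟨[], 0, 0, rfl, rfl⟩
  · have hW : npow L₁ e ≠ [] := npow_ne_nil h1 he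
    have hc1 : L₁ ++ npow L₁ e = npow L₁ e ++ L₁ := by
      rw [← npow_succ, ← npow_succ']
    have hc2 : L₂ ++ npow L₁ e = npow L₁ e ++ L₂ := by
      rw [h, ← npow_succ, ← npow_succ']
    exact exists_common_root hW hc1 hc2

end Comm

open FreeGroup

variable {α : Type*}

/-- The no-cancellation relation on letters: `p` followed by `q` does not cancel. -/
def RR : (α × Bool) → (α × Bool) → Prop := fun p q => ¬(p.1 = q.1 ∧ p.2 = !q.2)

/-- A word whose last letter does not cancel with its first letter (cyclically reduced wrap
condition). -/
def NoWrap (T : List (α × Bool)) : Prop := ∀ p ∈ T.getLast?, ∀ q ∈ T.head?, RR p q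

section Reduced
variable [DecidableEq α]

lemma chain_reduce (L : List (α × Bool)) : List.Chain' RR (reduce L) := by
  induction L with
  | nil => simp [List.Chain']
  | cons x L ih =>
    rw [reduce.cons]
    rcases hR : reduce L with _ | ⟨hd, tl⟩
    · simp [List.Chain']
    · rw [hR] at ih
      by_cases hc : x.1 = hd.1 ∧ x.2 = !hd.2
      · simpa [hc, List.Chain'] using ih.tail
      · simp only [if_neg hc]
        exact List.isChain_cons_cons.2 ⟨hc, ih⟩

lemma reduce_eq_self {L : List (α × Bool)} (h : List.Chain' RR L) : reduce L = L := by
  induction L with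
  | nil => rfl
  | cons x L ih =>
    have hL : List.Chain' RR L := h.tail
    rw [reduce.cons, ih hL]
    cases L with
    | nil => rfl
    | cons y t =>
      have hxy : RR x y := (List.isChain_cons_cons.1 h).1
      simp only [if_neg hxy]

lemma chain_toWord (x : FreeGroup α) : List.Chain' RR x.toWord := by
  rw [← reduce_toWord]; exact chain_reduce _

lemma toWord_mk_eq {L : List (α × Bool)} (h : List.Chain' RR L) : (mk L).toWord = L := by
  rw [toWord_mk, reduce_eq_self h]

end Reduced

section InvRev

lemma invRev_append (L₁ L₂ : List (α × Bool)) :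
    invRev (L₁ ++ L₂) = invRev L₂ ++ invRev L₁ := by
  simp [invRev]

lemma invRev_cons (p : α × Bool) (L : List (α × Bool)) :
    invRev (p :: L) = invRev L ++ [(p.1, !p.2)] := by
  simp [invRev]

lemma length_invRev (L : List (α × Bool)) : (invRev L).length = L.length := by
  simp [invRev]

lemma getLast?_invRev (L : List (α × Bool)) :
    (invRev L).getLast? = L.head?.map (fun p => (p.1, !p.2)) := by
  rw [invRev, List.getLast?_reverse, List.head?_map]

end InvRev


/-- Every reduced word decomposes as `C ++ T ++ C⁻¹` with `T` cyclically reduced. -/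
theorem exists_cyc_decomp :
    ∀ (n : ℕ) (W : List (α × Bool)), W.length = n → List.Chain' RR W →
      ∃ C T, W = C ++ T ++ invRev C ∧ List.Chain' RR T ∧ NoWrap T := by
  intro n
  induction n using Nat.strong_induction_on with
  | _ n ih =>
    intro W hlen hW
    rcases W with _ | ⟨p, W'⟩
    · exact ⟨[], [], by simp [invRev], List.isChain_nil, by simp [NoWrap]⟩
    · by_cases hwrap : NoWrap (p :: W')
      · exact ⟨[], p :: W', by simp [invRev], hW, hwrap⟩
      · -- last letter cancels with first
        simp only [NoWrap, not_forall] at hwrap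
        obtain ⟨q, hq, p', hp', hnR⟩ := hwrap
        obtain rfl : p = p' := by simp at hp'; exact hp'
        simp only [RR, not_not] at hnR
        -- W' ≠ []
        rcases W' with _ | ⟨r, W''⟩
        · simp at hq
          subst hq
          simp at hnR
        · have hq' : (r :: W'').getLast? = some q := by
            have h0 : (p :: r :: W'').getLast? = some q := hq
            rwa [List.getLast?_cons_cons] at h0
          have hMq : r :: W'' = (r :: W'').dropLast ++ [q] := by
            have h1 := List.dropLast_append_getLast? q hq'
            exact h1.symm
          set M := (r :: W'').dropLast with hMdef
          have hWeq : p :: (r :: W'') = ([p] ++ M) ++ [q] := by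
            rw [hMq]; simp
          have hchainM : List.Chain' RR M := by
            have h3 : List.Chain' RR (([p] ++ M) ++ [q]) := by rw [← hWeq]; exact hW
            exact ((List.isChain_append.1 (List.isChain_append.1 h3).1).2.1)
          have hlM : M.length = W''.length := by simp [hMdef]
          have hlenM : M.length < n := by
            rw [hlM, ← hlen]; simp only [List.length_cons]; omega
          obtain ⟨C', T, hdecomp, hchainT, hwrapT⟩ := ih _ hlenM M rfl hchainM
          refine ⟨p :: C', T, ?_, hchainT, hwrapT⟩
          rw [invRev_cons]
          have hq2 : q = (p.1, !p.2) := Prod.ext hnR.1 hnR.2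
          calc p :: r :: W'' = [p] ++ M ++ [q] := hWeq
            _ = [p] ++ (C' ++ T ++ invRev C') ++ [(p.1, !p.2)] := by rw [← hdecomp, ← hq2]
            _ = p :: C' ++ T ++ (invRev C' ++ [(p.1, !p.2)]) := by simp [List.append_assoc]


section Uniqueness

lemma head?_append_of_ne_nil' {L₁ L₂ : List (α × Bool)} (h : L₁ ≠ []) :
    (L₁ ++ L₂).head? = L₁.head? := by cases L₁ <;> simp_all

lemma cyc_decomp_unique_aux {C D T S : List (α × Bool)} (hlen : C.length ≤ D.length)
    (h : C ++ T ++ invRev C = D ++ S ++ invRev D) (hS : S ≠ []) (hwT : NoWrap T) :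
    C = D ∧ T = S := by
  have hpre : C <+: D := by
    have h1 : C <+: D ++ (S ++ invRev D) := by
      rw [← List.append_assoc, ← h, List.append_assoc]
      exact List.prefix_append _ _
    exact prefix_of_prefix_append h1 hlen
  obtain ⟨E, rfl⟩ := hpre
  rw [invRev_append] at h
  simp only [List.append_assoc] at h
  have h2 := List.append_cancel_left h
  simp only [← List.append_assoc] at h2
  have h3 : T = E ++ S ++ invRev E := List.append_cancel_right h2
  rcases E with _ | ⟨e, E'⟩
  · refine ⟨by simp, ?_⟩
    rw [h3]; simp [invRev]
  · exfalso
    have hinvne : invRev (e :: E') ≠ [] := by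
      intro hc
      have := congrArg List.length hc
      rw [length_invRev] at this
      simp at this
    have hhead : T.head? = some e := by
      rw [h3, List.append_assoc, head?_append_of_ne_nil' (by simp)]
      simp
    have hlast : T.getLast? = some (e.1, !e.2) := by
      rw [h3, List.getLast?_append_of_ne_nil _ hinvne, getLast?_invRev]
      simp
    have := hwT _ hlast _ hhead
    simp [RR] at this

lemma cyc_decomp_unique {C D T S : List (α × Bool)}
    (h : C ++ T ++ invRev C = D ++ S ++ invRev D) (hT : T ≠ []) (hS : S ≠ [])
    (hwT : NoWrap T) (hwS : NoWrap S) : C = D ∧ T = S := by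
  rcases le_total C.length D.length with hle | hle
  · exact cyc_decomp_unique_aux hle h hS hwT
  · obtain ⟨h1, h2⟩ := cyc_decomp_unique_aux hle h.symm hT hwS
    exact ⟨h1.symm, h2.symm⟩

end Uniqueness

section Power

lemma chain_npow {T : List (α × Bool)} (hT : List.Chain' RR T) (hw : NoWrap T) (e : ℕ) :
    List.Chain' RR (npow T e) := by
  induction e with
  | zero => simp [npow_zero, List.Chain']
  | succ k ih =>
    rw [npow_succ]
    refine List.isChain_append.2 ⟨hT, ih, ?_⟩
    intro p hp q hq
    rcases Nat.eq_zero_or_pos k with rfl | hk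
    · simp [npow_zero] at hq
    · rw [head?_npow hk] at hq
      exact hw p hp q hq

lemma noWrap_npow {T : List (α × Bool)} (hw : NoWrap T) {e : ℕ} (he : 1 ≤ e) :
    NoWrap (npow T e) := by
  intro p hp q hq
  rw [getLast?_npow he] at hp
  rw [head?_npow he] at hq
  exact hw p hp q hq

end Power

section Group
variable [DecidableEq α]

lemma toWord_conj_pow {C T : List (α × Bool)} (h : List.Chain' RR (C ++ T ++ invRev C))
    (hwT : NoWrap T) (hT : T ≠ []) {e : ℕ} (he : 1 ≤ e) :
    ((mk (C ++ T ++ invRev C)) ^ e).toWord = C ++ npow T e ++ invRev C := by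
  -- group computation
  have hgrp : (mk (C ++ T ++ invRev C)) ^ e = mk (C ++ npow T e ++ invRev C) := by
    have h1 : mk (C ++ T ++ invRev C) = mk C * mk T * (mk C)⁻¹ := by
      rw [inv_mk, mul_mk, mul_mk]
    rw [h1, conj_pow, inv_mk, ← mul_mk, ← mul_mk]
    congr 2
    rw [pow_mk]
    rfl
  rw [hgrp]
  -- the word is reduced
  apply toWord_mk_eq
  have hC : List.Chain' RR (C ++ T) := (List.isChain_append.1 h).1
  have hCX : ∀ p ∈ (C ++ T).getLast?, ∀ q ∈ (invRev C).head?, RR p q :=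
    (List.isChain_append.1 h).2.2
  have hX : List.Chain' RR (invRev C) := (List.isChain_append.1 h).2.1
  have hCc : List.Chain' RR C := (List.isChain_append.1 hC).1
  have hjCT : ∀ p ∈ C.getLast?, ∀ q ∈ T.head?, RR p q := (List.isChain_append.1 hC).2.2
  refine List.isChain_append.2 ⟨List.isChain_append.2 ⟨hCc, chain_npow (List.isChain_append.1 hC).2.1 hwT e, ?_⟩, hX, ?_⟩
  · intro p hp q hq
    rw [head?_npow he] at hq
    exact hjCT p hp q hq
  · intro p hp q hq
    have hnp : npow T e ≠ [] := npow_ne_nil hT he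
    rw [List.getLast?_append_of_ne_nil _ hnp, getLast?_npow he] at hp
    refine hCX p ?_ q hq
    rw [List.getLast?_append_of_ne_nil _ hT]
    exact hp

/-- Decomposition of a free group element into conjugator and cyclically reduced core. -/
lemma exists_conj_decomp (x : FreeGroup α) :
    ∃ C T, x.toWord = C ++ T ++ invRev C ∧ List.Chain' RR T ∧ NoWrap T := by
  obtain ⟨C, T, h1, h2, h3⟩ := exists_cyc_decomp x.toWord.length x.toWord rfl (chain_toWord x)
  exact ⟨C, T, h1, h2, h3⟩

/-- Two elements of a free group with a common nontrivial power are powers of a common element. -/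
theorem freeGroup_common_root {u v w : FreeGroup α} {e m : ℕ} (he : 1 ≤ e) (hm : 1 ≤ m)
    (hu : w = u ^ e) (hv : w = v ^ m) (hw : w ≠ 1) :
    ∃ (z : FreeGroup α) (a b : ℕ), 1 ≤ a ∧ 1 ≤ b ∧ u = z ^ a ∧ v = z ^ b := by
  obtain ⟨C, T, hCT, hchT, hwT⟩ := exists_conj_decomp u
  obtain ⟨D, S, hDS, hchS, hwS⟩ := exists_conj_decomp v
  have hu' : u = mk (C ++ T ++ invRev C) := by rw [← hCT, mk_toWord]
  have hv' : v = mk (D ++ S ++ invRev D) := by rw [← hDS, mk_toWord]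
  have hTne : T ≠ [] := by
    rintro rfl
    apply hw
    have : u = 1 := by
      rw [hu']
      simp only [List.append_nil]
      rw [← mul_mk, ← inv_mk, mul_inv_cancel]
    rw [hu, this, one_pow]
  have hSne : S ≠ [] := by
    rintro rfl
    apply hw
    have : v = 1 := by
      rw [hv']
      simp only [List.append_nil]
      rw [← mul_mk, ← inv_mk, mul_inv_cancel]
    rw [hv, this, one_pow]
  have hW1 : w.toWord = C ++ npow T e ++ invRev C := by
    rw [hu, hu']; exact toWord_conj_pow (hCT ▸ chain_toWord u) hwT hTne he
  have hW2 : w.toWord = D ++ npow S m ++ invRev D := by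
    rw [hv, hv']; exact toWord_conj_pow (hDS ▸ chain_toWord v) hwS hSne hm
  have heq : C ++ npow T e ++ invRev C = D ++ npow S m ++ invRev D := by
    rw [← hW1, ← hW2]
  obtain ⟨hCD, hTS⟩ := cyc_decomp_unique heq (npow_ne_nil hTne he) (npow_ne_nil hSne hm)
    (noWrap_npow hwT he) (noWrap_npow hwS hm)
  obtain ⟨Z, a, b, hZa, hZb⟩ := common_root_of_pow_eq he hm hTS
  refine ⟨mk C * mk Z * (mk C)⁻¹, a, b, ?_, ?_, ?_, ?_⟩
  · rcases Nat.eq_zero_or_pos a with rfl | h; · simp [npow_zero] at hZa; exact absurd hZa hTne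
    · exact h
  · rcases Nat.eq_zero_or_pos b with rfl | h; · simp [npow_zero] at hZb; exact absurd hZb hSne
    · exact h
  · rw [conj_pow, hu', inv_mk, ← mul_mk, ← mul_mk]
    congr 2
    rw [pow_mk, hZa]
    rfl
  · rw [conj_pow, hv', inv_mk, ← mul_mk, ← mul_mk, ← hCD]
    congr 2
    rw [pow_mk, hZb]
    rfl

end Group
end PowerRoot

theorem power_root (α : Type) (w u v : FreeGroup α) (e : ℕ) (s : ℤ)
    (hw : w ≠ 1) (h : IsRootExp w u e) (hs : s ≠ 0) (hv : w = v ^ s) :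
    ∃ k : ℤ, k ≠ 0 ∧ v = u ^ k := by
  classical
  obtain ⟨he, hwu, hmax⟩ := h
  -- reduce to a natural power of v or v⁻¹
  obtain ⟨v', m, hm, hvm, hvv⟩ :
      ∃ (v' : FreeGroup α) (m : ℕ), 1 ≤ m ∧ w = v' ^ m ∧ (v = v' ∨ v = v'⁻¹) := by
    rcases lt_or_gt_of_ne hs with hneg | hpos
    · refine ⟨v⁻¹, (-s).toNat, by omega, ?_, Or.inr (by simp)⟩
      rw [hv, ← zpow_natCast, Int.toNat_of_nonneg (by omega), inv_zpow, ← zpow_neg, neg_neg]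
    · refine ⟨v, s.toNat, by omega, ?_, Or.inl rfl⟩
      rw [hv, ← zpow_natCast, Int.toNat_of_nonneg (by omega)]
  obtain ⟨z, a, b, ha, hb, hza, hzb⟩ := PowerRoot.freeGroup_common_root he hm hwu hvm hw
  have haw : w = z ^ (a * e) := by rw [hwu, hza, ← pow_mul]
  have hae : a * e ≤ e := hmax z (a * e) haw
  have ha1 : a = 1 := by nlinarith
  have hzu : u = z := by rw [hza, ha1, pow_one]
  rw [← hzu] at hzb
  rcases hvv with rfl | rfl
  · exact ⟨(b : ℤ), by omega, by rw [hzb, zpow_natCast]⟩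
  · refine ⟨-(b : ℤ), by omega, ?_⟩
    rw [zpow_neg, zpow_natCast, ← hzb]
end

section
/- Every free group is residually V for every nontrivial extension-closed pseudovariety V of finite groups; in particular, every free group is residually a finite p-group for each prime p. -/
set_option linter.unusedSectionVars false

namespace Magnus

variable {β : Type} [DecidableEq β] {N q : ℕ}

/-- Truncated words. -/
abbrev Wd (β : Type) (N : ℕ) : Type := {w : List β // w.length ≤ N}

/-- The truncated "power series" space as a module. -/
abbrev Vs (β : Type) (N q : ℕ) : Type := Wd β N → ZMod q

instance [Finite β] : Finite (Wd β N) := by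
  haveI := Fintype.ofFinite β
  have : Finite (Fin (N+1) → Option β) := inferInstance
  apply Finite.of_injective (fun w : Wd β N => (fun i : Fin (N+1) => w.val[(i:ℕ)]?))
  intro w w' h
  apply Subtype.ext
  apply List.ext_getElem?
  intro i
  by_cases hi : i < N + 1
  · exact congrFun h ⟨i, hi⟩
  · push_neg at hi
    rw [List.getElem?_eq_none, List.getElem?_eq_none]
    · exact le_trans w'.prop (by omega)
    · exact le_trans w.prop (by omega)

def tailW (w : Wd β N) : Wd β N :=
  ⟨w.val.tail, le_trans (by rw [List.length_tail]; omega) w.prop⟩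

def shift (j : β) : Module.End (ZMod q) (Vs β N q) where
  toFun v := fun w => if w.val.head? = some j then v (tailW w) else 0
  map_add' u v := by funext w; by_cases h : w.val.head? = some j <;> simp [h]
  map_smul' c v := by funext w; by_cases h : w.val.head? = some j <;> simp [h]

lemma shift_apply (j : β) (v : Vs β N q) (w : Wd β N) :
    shift j v w = if w.val.head? = some j then v (tailW w) else 0 := rfl

/-- "Strictly length increasing support" operators. -/
def Str (T : Module.End (ZMod q) (Vs β N q)) : Prop :=
  ∀ v w, T v w ≠ 0 → ∃ u : Wd β N, u.val.length < w.val.length ∧ v u ≠ 0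

lemma str_zero : Str (0 : Module.End (ZMod q) (Vs β N q)) := by
  intro v w h; simp at h

lemma str_shift (j : β) : Str (shift (N := N) (q := q) j) := by
  intro v w h
  rw [shift_apply] at h
  split_ifs at h with hh
  · refine ⟨tailW w, ?_, h⟩
    have : w.val ≠ [] := by intro e; rw [e] at hh; simp at hh
    simp only [tailW, List.length_tail]
    have := List.length_pos_iff.mpr this
    omega
  · simp at h

lemma Str.add {T S : Module.End (ZMod q) (Vs β N q)} (hT : Str T) (hS : Str S) :
    Str (T + S) := by
  intro v w h
  rw [LinearMap.add_apply] at h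
  rcases (by by_contra hc; push_neg at hc; rw [Pi.add_apply, hc.1, hc.2, add_zero] at h; exact h rfl :
    T v w ≠ 0 ∨ S v w ≠ 0) with h' | h'
  · exact hT v w h'
  · exact hS v w h'

lemma Str.mul {T S : Module.End (ZMod q) (Vs β N q)} (hT : Str T) (hS : Str S) :
    Str (T * S) := by
  intro v w h
  rw [Module.End.mul_apply] at h
  obtain ⟨u, hu, hu2⟩ := hT (S v) w h
  obtain ⟨u', hu', hu2'⟩ := hS v u hu2
  exact ⟨u', lt_trans hu' hu, hu2'⟩

lemma Str.neg {T : Module.End (ZMod q) (Vs β N q)} (hT : Str T) : Str (-T) := by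
  intro v w h
  rw [LinearMap.neg_apply, Pi.neg_apply, neg_ne_zero] at h
  exact hT v w h

lemma Str.sum {s : Finset ℕ} {F : ℕ → Module.End (ZMod q) (Vs β N q)}
    (h : ∀ i ∈ s, Str (F i)) : Str (∑ i ∈ s, F i) := by
  classical
  exact Finset.sum_induction F Str (fun a b ha hb => ha.add hb) str_zero h

lemma Str.pow {T : Module.End (ZMod q) (Vs β N q)} (hT : Str T) {i : ℕ} (hi : i ≠ 0) :
    Str (T ^ i) := by
  induction i with
  | zero => exact absurd rfl hi
  | succ n ih =>
    rcases Nat.eq_zero_or_pos n with rfl | hn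
    · simpa using hT
    · rw [pow_succ]
      exact (ih (by omega)).mul hT

lemma Str.pow_zero {T : Module.End (ZMod q) (Vs β N q)} (hT : Str T) : T ^ (N + 1) = 0 := by
  have key : ∀ (k : ℕ) (v : Vs β N q) (w : Wd β N), w.val.length < k → (T ^ k) v w = 0 := by
    intro k
    induction k with
    | zero => intro v w h; omega
    | succ n ih =>
      intro v w h
      by_contra hc
      rw [pow_succ'] at hc
      obtain ⟨u, hu, hu2⟩ := hT ((T ^ n) v) w (by rwa [Module.End.mul_apply] at hc)
      exact hu2 (ih v u (by omega))
  ext v w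
  simp only [LinearMap.zero_apply, Pi.zero_apply]
  exact key (N + 1) v w (by omega)

/-- Geometric-series inverse of `1 + T`. -/
def gi (T : Module.End (ZMod q) (Vs β N q)) : Module.End (ZMod q) (Vs β N q) :=
  ∑ i ∈ Finset.range (N + 1), (-T) ^ i

lemma gi_mul {T : Module.End (ZMod q) (Vs β N q)} (hT : Str T) : gi T * (1 + T) = 1 := by
  have h1 : (-T) ^ (N + 1) = 0 := hT.neg.pow_zero
  have := geom_sum_mul_neg (-T) (N + 1)
  rw [h1, sub_zero, sub_neg_eq_add] at this
  exact this

lemma mul_gi {T : Module.End (ZMod q) (Vs β N q)} (hT : Str T) : (1 + T) * gi T = 1 := by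
  have h1 : (-T) ^ (N + 1) = 0 := hT.neg.pow_zero
  have := mul_neg_geom_sum (-T) (N + 1)
  rw [h1, sub_zero, sub_neg_eq_add] at this
  exact this

/-- The Magnus unit attached to a letter. -/
def U (j : β) : (Module.End (ZMod q) (Vs β N q))ˣ :=
  ⟨1 + shift j, gi (shift j), mul_gi (str_shift j), gi_mul (str_shift j)⟩

end Magnus

namespace Magnus

variable {β : Type} [DecidableEq β] {N q : ℕ}

lemma U_val (j : β) : ((U j : (Module.End (ZMod q) (Vs β N q))ˣ) : Module.End (ZMod q) (Vs β N q))
    = 1 + shift j := rfl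

lemma U_inv_val (j : β) :
    (((U j)⁻¹ : (Module.End (ZMod q) (Vs β N q))ˣ) : Module.End (ZMod q) (Vs β N q))
    = gi (shift j) := rfl

lemma U_apply (j : β) (v : Vs β N q) {w w' : Wd β N} (hw : w.val = j :: w'.val)
    (hw' : w'.val.head? ≠ some j) :
    ((U j).val v w = v w + v w') ∧ ((U j).val v w' = v w') := by
  have htail : tailW w = w' := Subtype.ext (show w.val.tail = w'.val by rw [hw]; rfl)
  constructor
  · rw [U_val, LinearMap.add_apply, Pi.add_apply, Module.End.one_apply, shift_apply,
      if_pos (by rw [hw]; rfl), htail]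
  · rw [U_val, LinearMap.add_apply, Pi.add_apply, Module.End.one_apply, shift_apply,
      if_neg hw', add_zero]

lemma U_inv_apply (j : β) (v : Vs β N q) {w w' : Wd β N} (hw : w.val = j :: w'.val)
    (hw' : w'.val.head? ≠ some j) :
    ((U j)⁻¹.val v w = v w - v w') ∧ ((U j)⁻¹.val v w' = v w') := by
  set x := (U j)⁻¹.val v with hx
  have hux : (U j).val x = v := by
    rw [hx, ← Module.End.mul_apply, ← Units.val_mul, mul_inv_cancel, Units.val_one,
      Module.End.one_apply]
  have h1 := (U_apply j x hw hw').1
  have h2 := (U_apply j x hw hw').2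
  rw [hux] at h1 h2
  refine ⟨?_, h2.symm⟩
  rw [h1, h2]; ring

lemma zpow_eval (j : β) (d : ℤ) {w w' : Wd β N} (hw : w.val = j :: w'.val)
    (hw' : w'.val.head? ≠ some j) :
    ∀ v : Vs β N q, ((U j ^ d).val v w = v w + (d : ZMod q) * v w')
      ∧ ((U j ^ d).val v w' = v w') := by
  induction d using Int.induction_on with
  | zero => intro v; simp
  | succ i ih =>
    intro v
    have hstep : ((U j : (Module.End (ZMod q) (Vs β N q))ˣ) ^ ((i : ℤ) + 1)).val v
        = ((U j) ^ (i : ℤ)).val ((U j).val v) := by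
      rw [zpow_add_one, Units.val_mul, Module.End.mul_apply]
    obtain ⟨ih1, ih2⟩ := ih ((U j).val v)
    obtain ⟨hu1, hu2⟩ := U_apply j v hw hw'
    constructor
    · rw [hstep, ih1, hu1, hu2]; push_cast; ring
    · rw [hstep, ih2, hu2]
  | pred i ih =>
    intro v
    have hstep : ((U j : (Module.End (ZMod q) (Vs β N q))ˣ) ^ (-(i : ℤ) - 1)).val v
        = ((U j) ^ (-(i : ℤ))).val ((U j)⁻¹.val v) := by
      rw [zpow_sub_one, Units.val_mul, Module.End.mul_apply]
    obtain ⟨ih1, ih2⟩ := ih ((U j)⁻¹.val v)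
    obtain ⟨hu1, hu2⟩ := U_inv_apply j v hw hw'
    constructor
    · rw [hstep, ih1, hu1, hu2]; push_cast; ring
    · rw [hstep, ih2, hu2]

/-- Operators that only prepend copies of `j`. -/
def Pres (j : β) (T : Module.End (ZMod q) (Vs β N q)) : Prop :=
  ∀ v w, T v w ≠ 0 → ∃ (i : ℕ) (u : Wd β N),
    w.val = List.replicate i j ++ u.val ∧ v u ≠ 0

lemma pres_zero (j : β) : Pres j (0 : Module.End (ZMod q) (Vs β N q)) := by
  intro v w h; simp at h

lemma pres_one (j : β) : Pres j (1 : Module.End (ZMod q) (Vs β N q)) := by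
  intro v w h
  exact ⟨0, w, by simp, by simpa using h⟩

lemma pres_shift (j : β) : Pres j (shift (N := N) (q := q) j) := by
  intro v w h
  rw [shift_apply] at h
  split_ifs at h with hh
  · refine ⟨1, tailW w, ?_, h⟩
    cases hval : w.val with
    | nil => rw [hval] at hh; simp at hh
    | cons a t =>
      rw [hval] at hh
      simp only [List.head?_cons, Option.some.injEq] at hh
      simp [tailW, hval, hh, List.replicate]
  · simp at h

lemma Pres.add {j : β} {T S : Module.End (ZMod q) (Vs β N q)} (hT : Pres j T) (hS : Pres j S) :
    Pres j (T + S) := by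
  intro v w h
  rw [LinearMap.add_apply] at h
  have hor : T v w ≠ 0 ∨ S v w ≠ 0 := by
    by_contra hc
    push_neg at hc
    rw [Pi.add_apply, hc.1, hc.2, add_zero] at h
    exact h rfl
  rcases hor with h' | h'
  · exact hT v w h'
  · exact hS v w h'

lemma Pres.mul {j : β} {T S : Module.End (ZMod q) (Vs β N q)} (hT : Pres j T) (hS : Pres j S) :
    Pres j (T * S) := by
  intro v w h
  rw [Module.End.mul_apply] at h
  obtain ⟨i, u, hu, hu2⟩ := hT (S v) w h
  obtain ⟨i', u', hu', hu2'⟩ := hS v u hu2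
  exact ⟨i + i', u', by rw [hu, hu', List.replicate_add, List.append_assoc], hu2'⟩

lemma Pres.neg {j : β} {T : Module.End (ZMod q) (Vs β N q)} (hT : Pres j T) : Pres j (-T) := by
  intro v w h
  rw [LinearMap.neg_apply, Pi.neg_apply, neg_ne_zero] at h
  exact hT v w h

lemma Pres.sum {j : β} {s : Finset ℕ} {F : ℕ → Module.End (ZMod q) (Vs β N q)}
    (h : ∀ i ∈ s, Pres j (F i)) : Pres j (∑ i ∈ s, F i) := by
  classical
  exact Finset.sum_induction F (Pres j) (fun a b ha hb => ha.add hb) (pres_zero j) h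

lemma Pres.pow {j : β} {T : Module.End (ZMod q) (Vs β N q)} (hT : Pres j T) (i : ℕ) :
    Pres j (T ^ i) := by
  induction i with
  | zero => simpa using pres_one j
  | succ n ih => rw [pow_succ]; exact ih.mul hT

lemma pres_gi (j : β) : Pres j (gi (shift (N := N) (q := q) j)) :=
  Pres.sum fun i _ => ((pres_shift j).neg).pow i

lemma pres_zpow (j : β) (d : ℤ) :
    Pres j (((U j : (Module.End (ZMod q) (Vs β N q))ˣ) ^ d).val) := by
  rcases d with n | n
  · rw [Int.ofNat_eq_coe, zpow_natCast, Units.val_pow_eq_pow_val, U_val]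
    exact ((pres_one j).add (pres_shift j)).pow n
  · rw [zpow_negSucc, ← inv_pow, Units.val_pow_eq_pow_val, U_inv_val]
    exact (pres_gi j).pow (n + 1)

end Magnus

namespace Magnus

variable {β : Type} [DecidableEq β] {N q : ℕ}

def dnil : Vs β N q := fun w => if w.val = [] then 1 else 0

def Conc : List β → List (β × ℤ) → Prop
  | w, [] => w = []
  | w, x :: t => ∃ (i : ℕ) (u : List β), w = List.replicate i x.1 ++ u ∧ Conc u t

def mu : List (β × ℤ) → Vs β N q
  | [] => dnil
  | x :: t => ((U x.1 ^ x.2 : (Module.End (ZMod q) (Vs β N q))ˣ) :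
      Module.End (ZMod q) (Vs β N q)) (mu t)

lemma mu_supp : ∀ (L : List (β × ℤ)) (w : Wd β N), mu (N := N) (q := q) L w ≠ 0 → Conc w.val L := by
  intro L
  induction L with
  | nil =>
    intro w h
    rw [mu, dnil] at h
    split_ifs at h with hh
    · exact hh
    · simp at h
  | cons x t ih =>
    intro w h
    obtain ⟨i, u, hu, hu2⟩ := pres_zpow x.1 x.2 (mu t) w h
    exact ⟨i, u.val, hu, ih u hu2⟩

lemma cons_suffix_tail {γ : Type} {a : γ} {l₁ l₂ : List γ} (h : a :: l₁ <:+ l₂) :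
    l₁ <:+ l₂.tail := by
  obtain ⟨pre, rfl⟩ := h
  cases pre with
  | nil => simp
  | cons b pre' => exact ⟨pre' ++ [a], by simp⟩

lemma key : ∀ (Rb Q : List (β × ℤ)), List.IsChain (fun a b => a.1 ≠ b.1) Q →
    Rb <:+ Q.tail → Q ≠ [] → ¬ Conc (Q.map Prod.fst) Rb := by
  intro Rb
  induction Rb with
  | nil =>
    intro Q _ _ hQ hc
    rw [Conc] at hc
    exact hQ (List.map_eq_nil_iff.mp hc)
  | cons x R' ih =>
    intro Q hchain hsuf hQ hc
    obtain ⟨i, u, hu, hcu⟩ := hc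
    obtain ⟨q₀, Qt, rfl⟩ := List.exists_cons_of_ne_nil hQ
    cases i with
    | zero =>
      rw [List.replicate_zero, List.nil_append] at hu
      subst hu
      exact ih (q₀ :: Qt) hchain ((List.suffix_cons x R').trans hsuf) (by simp) hcu
    | succ k =>
      rw [List.replicate_succ, List.cons_append, List.map_cons] at hu
      obtain ⟨h1, h2⟩ := List.cons_eq_cons.mp hu
      have hQt : Qt ≠ [] := by
        intro e
        rw [e] at hsuf
        simp only [List.tail_cons] at hsuf
        exact (List.cons_ne_nil x R') (List.suffix_nil.mp hsuf)
      cases k with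
      | succ k' =>
        cases Qt with
        | nil => exact hQt rfl
        | cons y Qt' =>
          rw [List.replicate_succ, List.cons_append, List.map_cons] at h2
          obtain ⟨h3, _⟩ := List.cons_eq_cons.mp h2
          exact (List.isChain_cons_cons.mp hchain).1 (h1.trans h3.symm)
      | zero =>
        rw [List.replicate_zero, List.nil_append] at h2
        subst h2
        exact ih Qt (List.IsChain.tail hchain) (cons_suffix_tail hsuf) hQt hcu

lemma mu_eval : ∀ (L : List (β × ℤ)), List.IsChain (fun a b : β × ℤ => a.1 ≠ b.1) L →
    ∀ (hlen : (L.map Prod.fst).length ≤ N),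
    mu (N := N) (q := q) L ⟨L.map Prod.fst, hlen⟩ = (L.map (fun x => (x.2 : ZMod q))).prod := by
  intro L
  induction L with
  | nil => intro _ _; rw [mu, dnil]; simp
  | cons x t ih =>
    intro hchain hlen
    have hlen' : (t.map Prod.fst).length ≤ N := by
      rw [List.map_cons] at hlen; simp only [List.length_cons] at hlen; omega
    set w : Wd β N := ⟨(x :: t).map Prod.fst, hlen⟩ with hwdef
    set w' : Wd β N := ⟨t.map Prod.fst, hlen'⟩ with hwdef'
    have hw : w.val = x.1 :: w'.val := rfl
    have hw' : w'.val.head? ≠ some x.1 := by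
      cases t with
      | nil => simp [hwdef']
      | cons y t' =>
        have := (List.isChain_cons_cons.mp hchain).1
        simp only [hwdef', List.map_cons, List.head?_cons, ne_eq, Option.some.injEq]
        exact fun e => this e.symm
    have heval := (zpow_eval (q := q) x.1 x.2 hw hw' (mu t)).1
    have hzero : mu (N := N) (q := q) t w = 0 := by
      by_contra hc
      exact key t (x :: t) hchain (List.suffix_refl t) (by simp) (mu_supp t w hc)
    rw [mu, heval, hzero, ih (List.IsChain.tail hchain) hlen', List.map_cons, List.prod_cons,
      zero_add]

lemma natCast_q : ((q : ℕ) : Module.End (ZMod q) (Vs β N q)) = 0 := by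
  apply LinearMap.ext
  intro v
  rw [Module.End.natCast_apply, LinearMap.zero_apply, ← Nat.cast_smul_eq_nsmul (ZMod q),
    ZMod.natCast_self, zero_smul]

lemma choose_dvd_aux {p : ℕ} (hp : p.Prime) (k M : ℕ) {i : ℕ} (h1 : 1 ≤ i) (h2 : i + k ≤ M) :
    p ^ k ∣ (p ^ M).choose i := by
  have hiM : i ≤ p ^ M := le_trans (by omega) (le_of_lt (Nat.lt_pow_self (n := M) hp.one_lt))
  have hmult := hp.emultiplicity_choose_prime_pow hiM (by omega)
  apply pow_dvd_of_le_emultiplicity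
  rw [hmult]
  have hdvd : p ^ (multiplicity p i) ∣ i := pow_multiplicity_dvd p i
  have hle : p ^ (multiplicity p i) ≤ i := Nat.le_of_dvd (by omega) hdvd
  have h3 : multiplicity p i < 2 ^ (multiplicity p i) := Nat.lt_two_pow_self
  have h4 : (2:ℕ) ^ (multiplicity p i) ≤ p ^ (multiplicity p i) :=
    Nat.pow_le_pow_left hp.two_le _
  have h5 : multiplicity p i ≤ i := by omega
  exact_mod_cast (by omega : k ≤ M - multiplicity p i)

def G0 : Subgroup (Module.End (ZMod q) (Vs β N q))ˣ where
  carrier := {u | Str ((u : Module.End (ZMod q) (Vs β N q)) - 1)}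
  one_mem' := by simpa using str_zero
  mul_mem' := by
    intro a b ha hb
    have hab : ((a * b : (Module.End (ZMod q) (Vs β N q))ˣ) : Module.End (ZMod q) (Vs β N q)) - 1
        = ((a : Module.End (ZMod q) (Vs β N q)) - 1) * ((b : Module.End (ZMod q) (Vs β N q)) - 1)
          + ((a : Module.End (ZMod q) (Vs β N q)) - 1)
          + ((b : Module.End (ZMod q) (Vs β N q)) - 1) := by
      rw [Units.val_mul, sub_mul, mul_sub, one_mul, mul_one]; abel
    show Str _
    rw [hab]
    exact ((Str.mul ha hb).add ha).add hb
  inv_mem' := by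
    intro u hu
    have hu' : Str ((u : Module.End (ZMod q) (Vs β N q)) - 1) := hu
    have h1 : ((u : Module.End (ZMod q) (Vs β N q))) * gi ((u : Module.End (ZMod q) (Vs β N q)) - 1) = 1 := by
      have := mul_gi hu'
      rwa [add_sub_cancel] at this
    have hinv : ((u⁻¹ : (Module.End (ZMod q) (Vs β N q))ˣ) : Module.End (ZMod q) (Vs β N q))
        = gi ((u : Module.End (ZMod q) (Vs β N q)) - 1) := Units.inv_eq_of_mul_eq_one_right h1
    show Str _
    rw [hinv]
    set t := (u : Module.End (ZMod q) (Vs β N q)) - 1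
    have : gi t - 1 = ∑ i ∈ Finset.range N, (-t) ^ (i + 1) := by
      rw [gi, Finset.sum_range_succ']
      simp
    rw [this]
    exact Str.sum fun i _ => (hu'.neg).pow (Nat.succ_ne_zero i)

lemma mem_G0_pow_eq_one {p k : ℕ} (hp : p.Prime) (hq : q = p ^ k)
    (u : (Module.End (ZMod q) (Vs β N q))ˣ) (hu : u ∈ G0 (β := β) (N := N) (q := q)) :
    u ^ (p ^ (N + k)) = 1 := by
  have hu' : Str ((u : Module.End (ZMod q) (Vs β N q)) - 1) := hu
  set t := (u : Module.End (ZMod q) (Vs β N q)) - 1 with ht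
  set m := p ^ (N + k) with hm
  apply Units.ext
  rw [Units.val_pow_eq_pow_val, Units.val_one]
  have hval : (u : Module.End (ZMod q) (Vs β N q)) = t + 1 := by rw [ht]; exact (sub_add_cancel _ _).symm
  rw [hval, (Commute.one_right t).add_pow]
  rw [Finset.sum_eq_single_of_mem 0 (Finset.mem_range.mpr (Nat.succ_pos m))]
  · simp
  · intro i _ hne
    rw [one_pow]
    rcases le_or_gt i N with hiN | hiN
    · have hdvd : q ∣ m.choose i :=
        hq ▸ (hm ▸ choose_dvd_aux hp k (N + k) (Nat.one_le_iff_ne_zero.mpr hne) (by omega))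
      obtain ⟨s, hs⟩ := hdvd
      rw [hs, Nat.cast_mul, natCast_q, zero_mul, mul_zero]
    · have hti : t ^ i = 0 := by
        have hieq : i = (N + 1) + (i - (N + 1)) := by omega
        rw [hieq, pow_add, hu'.pow_zero, zero_mul]
      rw [hti, zero_mul, zero_mul]

lemma U_mem_G0 (j : β) : U (N := N) (q := q) j ∈ G0 (β := β) (N := N) (q := q) := by
  show Str _
  have : ((U j : (Module.End (ZMod q) (Vs β N q))ˣ) : Module.End (ZMod q) (Vs β N q)) - 1
      = shift j := by rw [U_val]; exact add_sub_cancel_left _ _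
  rw [this]
  exact str_shift j

end Magnus

namespace Blocks

def eps (b : Bool) : ℤ := cond b 1 (-1)

@[simp] lemma eps_true : eps true = 1 := rfl
@[simp] lemma eps_false : eps false = -1 := rfl

lemma eps_ne_zero (b : Bool) : eps b ≠ 0 := by cases b <;> simp

variable {γ : Type} [DecidableEq γ]

def addL (x : γ × Bool) : List (γ × ℤ) → List (γ × ℤ)
  | [] => [(x.1, eps x.2)]
  | y :: t => if x.1 = y.1 then (y.1, y.2 + eps x.2) :: t else (x.1, eps x.2) :: y :: t

@[simp] lemma addL_nil (x : γ × Bool) : addL x [] = [(x.1, eps x.2)] := rfl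

lemma addL_cons (x : γ × Bool) (y : γ × ℤ) (t : List (γ × ℤ)) :
    addL x (y :: t) = if x.1 = y.1 then (y.1, y.2 + eps x.2) :: t
      else (x.1, eps x.2) :: y :: t := rfl

def blocks (l : List (γ × Bool)) : List (γ × ℤ) := l.foldr addL []

lemma blocks_cons (x : γ × Bool) (l : List (γ × Bool)) :
    blocks (x :: l) = addL x (blocks l) := rfl

lemma blocks_prod {G : Type*} [Group G] (F : γ → G) :
    ∀ l : List (γ × Bool), ((blocks l).map (fun y => F y.1 ^ y.2)).prod
      = (l.map (fun x => F x.1 ^ eps x.2)).prod := by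
  intro l
  induction l with
  | nil => rfl
  | cons x t ih =>
    rw [List.map_cons, List.prod_cons, ← ih, blocks_cons]
    cases hbt : blocks t with
    | nil => simp
    | cons y t' =>
      rw [addL_cons]
      split_ifs with he
      · rw [List.map_cons, List.prod_cons, List.map_cons, List.prod_cons, ← mul_assoc,
          he, ← zpow_add, add_comm]
      · rw [List.map_cons, List.prod_cons, List.map_cons, List.prod_cons]

/-- Words with no adjacent cancelling pair. -/
def RedC {δ : Type} (l : List (δ × Bool)) : Prop :=
  List.IsChain (fun u v : δ × Bool => u.1 = v.1 → u.2 = v.2) l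

lemma blocks_good : ∀ l : List (γ × Bool), RedC l →
    (List.IsChain (fun a b : γ × ℤ => a.1 ≠ b.1) (blocks l))
    ∧ (∀ y ∈ blocks l, y.2 ≠ 0)
    ∧ (∀ y ∈ blocks l, y.1 ∈ l.map Prod.fst)
    ∧ (blocks l).length ≤ l.length
    ∧ (∀ a b t', l = (a, b) :: t' → ∃ d T, blocks l = (a, d) :: T ∧ (0 < d ↔ b = true)) := by
  intro l
  induction l with
  | nil =>
    intro _
    refine ⟨by simp [blocks], by simp [blocks], by simp [blocks], by simp [blocks], ?_⟩
    intro a b t' h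
    exact absurd h (List.cons_ne_nil _ _).symm
  | cons x t ih =>
    intro hred
    have hred' : RedC t := hred.tail
    obtain ⟨ihchain, ihnz, ihlet, ihlen, ihhead⟩ := ih hred'
    cases ht : t with
    | nil =>
      subst ht
      refine ⟨by simp [blocks], ?_, ?_, by simp [blocks], ?_⟩
      · intro y hy
        simp only [blocks, List.foldr_cons, List.foldr_nil, addL_nil, List.mem_singleton] at hy
        subst hy
        exact eps_ne_zero x.2
      · intro y hy
        simp only [blocks, List.foldr_cons, List.foldr_nil, addL_nil, List.mem_singleton] at hy
        subst hy
        simp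
      · intro a b t' h
        obtain ⟨h4, h5⟩ := List.cons_eq_cons.mp h
        subst h4
        exact ⟨eps b, [], rfl, by cases b <;> simp⟩
    | cons y t'' =>
      subst ht
      obtain ⟨d', T, hbt, hsign⟩ := ihhead y.1 y.2 t'' (by simp)
      have hd'nz : d' ≠ 0 := by
        apply ihnz (y.1, d')
        rw [hbt]; exact List.mem_cons_self
      by_cases he : x.1 = y.1
      · have hsame : x.2 = y.2 := (List.isChain_cons_cons.mp hred).1 he
        have hblocks : blocks (x :: y :: t'') = (y.1, d' + eps x.2) :: T := by
          rw [blocks_cons, hbt, addL_cons, if_pos he]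
        have hdz : d' + eps x.2 ≠ 0 ∧ (0 < d' + eps x.2 ↔ x.2 = true) := by
          cases hb2 : x.2 with
          | true =>
            rw [hb2] at hsame
            have := hsign.mpr hsame.symm
            constructor
            · simp; omega
            · simp; omega
          | false =>
            rw [hb2] at hsame
            have : ¬ (0 < d') := fun hpos => by simp [hsign.mp hpos] at hsame
            constructor
            · simp; omega
            · simp; omega
        refine ⟨?_, ?_, ?_, ?_, ?_⟩
        · rw [hblocks]
          rw [hbt] at ihchain
          rcases List.isChain_cons.mp ihchain with ⟨hh, hT⟩
          exact List.isChain_cons.mpr ⟨hh, hT⟩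
        · intro z hz
          rw [hblocks] at hz
          rcases List.mem_cons.mp hz with rfl | hz'
          · exact hdz.1
          · exact ihnz z (by rw [hbt]; exact List.mem_cons_of_mem _ hz')
        · intro z hz
          rw [hblocks] at hz
          rcases List.mem_cons.mp hz with rfl | hz'
          · simp [he]
          · have := ihlet z (by rw [hbt]; exact List.mem_cons_of_mem _ hz')
            rw [List.map_cons]
            exact List.mem_cons_of_mem _ this
        · rw [hblocks]
          have : T.length + 1 = (blocks (y :: t'')).length := by rw [hbt]; rfl
          simp only [List.length_cons] at *
          omega
        · intro a b t3 h3
          obtain ⟨h4, _⟩ := List.cons_eq_cons.mp h3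
          subst h4
          refine ⟨d' + eps b, T, ?_, hdz.2⟩
          rw [hblocks, ← he]
      · have hblocks : blocks (x :: y :: t'') = (x.1, eps x.2) :: (y.1, d') :: T := by
          rw [blocks_cons, hbt, addL_cons, if_neg he]
        refine ⟨?_, ?_, ?_, ?_, ?_⟩
        · rw [hblocks]
          rw [hbt] at ihchain
          exact List.isChain_cons_cons.mpr ⟨he, ihchain⟩
        · intro z hz
          rw [hblocks] at hz
          rcases List.mem_cons.mp hz with rfl | hz'
          · exact eps_ne_zero x.2
          · exact ihnz z (by rw [hbt]; exact hz')
        · intro z hz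
          rw [hblocks] at hz
          rcases List.mem_cons.mp hz with rfl | hz'
          · simp
          · have := ihlet z (by rw [hbt]; exact hz')
            rw [List.map_cons]
            exact List.mem_cons_of_mem _ this
        · rw [hblocks]
          have : T.length + 1 = (blocks (y :: t'')).length := by rw [hbt]; rfl
          simp only [List.length_cons] at *
          omega
        · intro a b t3 h3
          obtain ⟨h4, _⟩ := List.cons_eq_cons.mp h3
          subst h4
          exact ⟨eps b, (y.1, d') :: T, hblocks, by cases b <;> simp⟩

end Blocks

namespace Magnus

variable {β : Type} [DecidableEq β] {N q : ℕ}

lemma prod_val_dnil : ∀ L : List (β × ℤ),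
    (((L.map (fun y => (U (N := N) (q := q) y.1) ^ y.2)).prod :
      (Module.End (ZMod q) (Vs β N q))ˣ) : Module.End (ZMod q) (Vs β N q)) dnil = mu L := by
  intro L
  induction L with
  | nil => simp [mu]
  | cons x t ih =>
    rw [List.map_cons, List.prod_cons, Units.val_mul, Module.End.mul_apply, ih, mu]

end Magnus

section Core

open Magnus Blocks

lemma toWord_redC {α : Type} [DecidableEq α] (g : FreeGroup α) : Blocks.RedC g.toWord := by
  have hred : FreeGroup.reduce g.toWord = g.toWord := FreeGroup.reduce_toWord g
  generalize hl : g.toWord = l at hred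
  rw [Blocks.RedC, List.isChain_iff_getElem]
  intro i h
  by_contra hbad
  push_neg at hbad
  obtain ⟨h1, h2⟩ := hbad
  have hi1 : i < l.length := by omega
  have hi2 : i + 1 < l.length := by omega
  have hv2 : (l[i + 1]'hi2).2 = !(l[i]'hi1).2 := by
    rcases Bool.eq_false_or_eq_true (l[i]'hi1).2 with hb | hb <;>
      rcases Bool.eq_false_or_eq_true (l[i + 1]'hi2).2 with hb' | hb' <;>
      rw [hb, hb'] at h2 ⊢ <;> first | rfl | exact absurd rfl h2
  have hv : (l[i + 1]'hi2) = ((l[i]'hi1).1, !(l[i]'hi1).2) := Prod.ext h1.symm hv2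
  have hdecomp : l = l.take i ++ (l[i]'hi1) :: (l[i + 1]'hi2) :: l.drop (i + 2) := by
    conv_lhs => rw [← List.take_append_drop i l]
    congr 1
    rw [List.drop_eq_getElem_cons hi1, List.drop_eq_getElem_cons hi2]
  apply FreeGroup.reduce.not (L₁ := l) (L₂ := l.take i) (L₃ := l.drop (i + 2))
    (x := (l[i]'hi1).1) (b := (l[i]'hi1).2)
  rw [hred]
  conv_lhs => rw [hdecomp]
  rw [hv]

theorem residually_p (p : ℕ) (hp : p.Prime) (α : Type) (g : FreeGroup α) (hg : g ≠ 1) :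
    ∃ (K : Type) (_ : Group K) (_ : Finite K) (φ : FreeGroup α →* K),
      Function.Surjective φ ∧ IsPGroup p K ∧ φ g ≠ 1 := by
  classical
  set l := g.toWord with hldef
  have hlred : RedC l := toWord_redC g
  have hlne : l ≠ [] := fun e => hg (FreeGroup.toWord_eq_nil_iff.mp e)
  set S : Finset α := l.toFinset.image Prod.fst with hSdef
  set β := {a : α // a ∈ S} with hβdef
  have hmemS : ∀ x ∈ l, x.1 ∈ S := by
    intro x hx
    exact Finset.mem_image.mpr ⟨x, List.mem_toFinset.mpr hx, rfl⟩
  set l' : List (β × Bool) := l.pmap (fun (x : α × Bool) (h : x.1 ∈ S) => ((⟨x.1, h⟩ : {a : α // a ∈ S}), x.2)) hmemS with hl'def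
  have hl'red : RedC l' := by
    have h0 : l.attach.map Subtype.val = l := List.attach_map_subtype_val l
    have hattach : List.IsChain
        (fun a b : {x : (α × Bool) // x ∈ l} => a.val.1 = b.val.1 → a.val.2 = b.val.2)
        l.attach := by
      have h1 := hlred
      rw [Blocks.RedC, ← h0] at h1
      exact (List.isChain_map Subtype.val).mp h1
    rw [Blocks.RedC, hl'def, List.pmap_eq_map_attach]
    apply (List.isChain_map _).mpr
    apply List.IsChain.imp ?_ hattach
    intro a b hab h1
    exact hab (congrArg Subtype.val h1)
  set L : List (β × ℤ) := blocks l' with hLdef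
  obtain ⟨hLchain, hLnz, _, hLlen, hLhead⟩ := blocks_good l' hl'red
  have hl'ne : l' ≠ [] := by
    intro e
    have : l'.length = l.length := List.length_pmap ..
    rw [e] at this
    exact hlne (List.length_eq_zero_iff.mp this.symm)
  have hLne : L ≠ [] := by
    obtain ⟨x', t', hx'⟩ := List.exists_cons_of_ne_nil hl'ne
    obtain ⟨d, T, hbt, _⟩ := hLhead x'.1 x'.2 t' (by rw [hx'])
    rw [hLdef, hbt]
    exact List.cons_ne_nil _ _
  set D : ℤ := (L.map Prod.snd).prod with hDdef
  have hD : D ≠ 0 := by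
    rw [hDdef]
    apply List.prod_ne_zero
    intro h0
    obtain ⟨y, hy, hy0⟩ := List.mem_map.mp h0
    exact hLnz y hy hy0
  set k : ℕ := D.natAbs.factorization p + 1 with hkdef
  set q : ℕ := p ^ k with hqdef
  haveI : NeZero q := ⟨pow_ne_zero k hp.pos.ne'⟩
  set N : ℕ := L.length with hNdef
  set f : α → (Module.End (ZMod q) (Vs β N q))ˣ :=
    fun a => if h : a ∈ S then U ⟨a, h⟩ else 1 with hfdef
  set φ0 : FreeGroup α →* (Module.End (ZMod q) (Vs β N q))ˣ := FreeGroup.lift f with hφ0def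
  -- finiteness
  haveI : Finite β := by rw [hβdef]; infer_instance
  haveI : Finite (Vs β N q) := by
    haveI : Finite (Wd β N) := inferInstance
    exact Pi.finite
  haveI : Finite (Module.End (ZMod q) (Vs β N q)) :=
    Finite.of_injective _ (DFunLike.coe_injective (F := Module.End (ZMod q) (Vs β N q)))
  haveI : Finite (Module.End (ZMod q) (Vs β N q))ˣ := inferInstance
  haveI : Finite φ0.range := Subtype.finite
  -- range is in G0
  have hrange : φ0.range ≤ G0 (β := β) (N := N) (q := q) := by
    rw [hφ0def, FreeGroup.range_lift_eq_closure]
    apply (Subgroup.closure_le _).mpr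
    rintro _ ⟨a, rfl⟩
    by_cases h : a ∈ S
    · simp only [hfdef, dif_pos h]
      exact U_mem_G0 _
    · simp only [hfdef, dif_neg h]
      exact (G0 (β := β) (N := N) (q := q)).one_mem
  refine ⟨φ0.range, inferInstance, inferInstance, φ0.rangeRestrict,
    φ0.rangeRestrict_surjective, ?_, ?_⟩
  · -- p-group
    intro x
    refine ⟨N + k, ?_⟩
    have hx := mem_G0_pow_eq_one (β := β) (N := N) hp hqdef x.val (hrange x.prop)
    apply Subtype.ext
    rw [SubmonoidClass.coe_pow, OneMemClass.coe_one, hx]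
  · -- nonvanishing
    intro hone
    have hstep1 : (l.map fun x => cond x.2 (f x.1) (f x.1)⁻¹)
        = l'.map (fun x => (U (N := N) (q := q) x.1) ^ eps x.2) := by
      rw [hl'def, List.map_pmap]
      rw [← List.pmap_eq_map (p := fun x : α × Bool => x.1 ∈ S)
        (f := fun x => cond x.2 (f x.1) (f x.1)⁻¹) (l := l) hmemS]
      apply List.pmap_congr_left
      intro x hx h1 h2
      have hfx : f x.1 = U (N := N) (q := q) ⟨x.1, h1⟩ := by
        simp only [hfdef, dif_pos h1]
      rw [hfx]
      cases hb : x.2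
      · rw [eps_false, zpow_neg_one, cond_false]
      · rw [eps_true, zpow_one, cond_true]
    have hφ0g : φ0 g = (L.map (fun y => (U (N := N) (q := q) y.1) ^ y.2)).prod := by
      conv_lhs => rw [← FreeGroup.mk_toWord (x := g)]
      rw [hφ0def, FreeGroup.lift_mk, ← hldef, hstep1,
        ← blocks_prod (fun j : β => U (N := N) (q := q) j) l', ← hLdef]
    have h1 : φ0 g = 1 := by
      have h2 := congrArg Subtype.val hone
      simpa using h2
    have hlen : (L.map Prod.fst).length ≤ N := by rw [List.length_map, hNdef]
    have heval := mu_eval (q := q) L hLchain hlen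
    have hmu : mu (N := N) (q := q) L = dnil := by
      rw [← prod_val_dnil L, ← hφ0g, h1, Units.val_one, Module.End.one_apply]
    have h0 : dnil (β := β) (N := N) (q := q) ⟨L.map Prod.fst, hlen⟩ = 0 := by
      rw [dnil, if_neg]
      intro e
      exact hLne (List.map_eq_nil_iff.mp e)
    rw [hmu, h0] at heval
    have hcast : (L.map (fun x : β × ℤ => ((x.2 : ℤ) : ZMod q))).prod = ((D : ℤ) : ZMod q) := by
      rw [hDdef,
        show (fun x : β × ℤ => ((x.2 : ℤ) : ZMod q)) = (fun d : ℤ => (d : ZMod q)) ∘ Prod.snd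
          from rfl, ← List.map_map]
      exact (map_list_prod (Int.castRingHom (ZMod q)).toMonoidHom _).symm
    have hzero : ((D : ℤ) : ZMod q) = 0 := by rw [← hcast, ← heval]
    have hdvd : (q : ℤ) ∣ D := (ZMod.intCast_zmod_eq_zero_iff_dvd D q).mp hzero
    have hdvdn : q ∣ D.natAbs := by
      have h3 := Int.natAbs_dvd_natAbs.mpr hdvd
      simpa using h3
    rw [hqdef] at hdvdn
    have hk : k ≤ D.natAbs.factorization p :=
      (Nat.Prime.pow_dvd_iff_le_factorization hp (Int.natAbs_ne_zero.mpr hD)).mp hdvdn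
    omega
end Core



/-- A class of finite groups. -/
def GroupClass : Type 1 := ∀ (G : Type) [Group G] [Finite G], Prop

/-- A pseudovariety of finite groups: closed under subgroups, quotients,
finite direct products (and isomorphism). -/
def IsPseudovariety (V : GroupClass) : Prop :=
  (∀ (G : Type) [Group G] [Finite G] (H : Subgroup G), V G → V H) ∧
  (∀ (G : Type) [Group G] [Finite G] (N : Subgroup G) [N.Normal], V G → V (G ⧸ N)) ∧
  (∀ (G H : Type) [Group G] [Finite G] [Group H] [Finite H], V G → V H → V (G × H)) ∧
  (∀ (G H : Type) [Group G] [Finite G] [Group H] [Finite H], V G → (G ≃* H) → V H)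

/-- `V` contains some nontrivial group. -/
def VNontrivial (V : GroupClass) : Prop :=
  ∃ (K : Type) (_ : Group K) (_ : Finite K), Nontrivial K ∧ V K

/-- `V` is closed under extensions. -/
def IsExtensionClosed (V : GroupClass) : Prop :=
  ∀ (G : Type) [Group G] [Finite G] (N : Subgroup G) [N.Normal],
    V N → V (G ⧸ N) → V G

/-- The closure of the subgroup `H` in the pro-`V` topology on `G`. -/
def classClosure (V : GroupClass) {G : Type} [Group G] (H : Subgroup G) : Set G :=
  { x | ∀ (K : Type) [Group K] [Finite K] (φ : G →* K), V K → φ x ∈ H.map φ }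

/-- `H` is closed in the pro-`V` topology on `G`. -/
def VClosed (V : GroupClass) {G : Type} [Group G] (H : Subgroup G) : Prop :=
  classClosure V H = (H : Set G)

theorem free_residually_V (V : GroupClass) (hps : IsPseudovariety V)
    (hec : IsExtensionClosed V) (hnt : VNontrivial V) :
    (∀ (α : Type) (g : FreeGroup α), g ≠ 1 →
      ∃ (K : Type) (_ : Group K) (_ : Finite K) (φ : FreeGroup α →* K),
        Function.Surjective φ ∧ V K ∧ φ g ≠ 1) ∧
    (∀ (p : ℕ), p.Prime → ∀ (α : Type) (g : FreeGroup α), g ≠ 1 →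
      ∃ (K : Type) (_ : Group K) (_ : Finite K) (φ : FreeGroup α →* K),
        Function.Surjective φ ∧ IsPGroup p K ∧ φ g ≠ 1) := by
  obtain ⟨K₀, _, _, hK₀nt, hK₀V⟩ := hnt
  obtain ⟨hsub, hquot, hprodV, hiso⟩ := hps
  haveI : Fintype K₀ := Fintype.ofFinite K₀
  have hcard : 1 < Fintype.card K₀ := Fintype.one_lt_card
  set p := (Fintype.card K₀).minFac with hpdef
  have hp : p.Prime := Nat.minFac_prime (by omega)
  haveI : Fact p.Prime := ⟨hp⟩
  obtain ⟨x0, hx0⟩ := exists_prime_orderOf_dvd_card p (Nat.minFac_dvd _)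
  have hVC : V (Subgroup.zpowers x0) := hsub K₀ _ hK₀V
  have hcardC : Nat.card (Subgroup.zpowers x0) = p := by rw [Nat.card_zpowers, hx0]
  have hVtriv : ∀ (G : Type) [Group G] [Finite G], Subsingleton G → V G := by
    intro G _ _ hss
    haveI : Subsingleton ((⊥ : Subgroup K₀)) :=
      ⟨fun a b => Subtype.ext (by rw [Subgroup.mem_bot.mp a.2, Subgroup.mem_bot.mp b.2])⟩
    refine hiso (⊥ : Subgroup K₀) G (hsub K₀ ⊥ hK₀V) ?_
    exact { toFun := fun _ => 1, invFun := fun _ => 1,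
            left_inv := fun a => Subsingleton.elim _ _,
            right_inv := fun a => Subsingleton.elim _ _,
            map_mul' := fun a b => Subsingleton.elim _ _ }
  have hallp : ∀ (n : ℕ) (G : Type) [Group G] [Finite G], Nat.card G = n → IsPGroup p G → V G := by
    intro n
    induction n using Nat.strong_induction_on with
    | _ n ih =>
      intro G _ _ hcardG hpg
      rcases subsingleton_or_nontrivial G with hss | hnt'
      · exact hVtriv G hss
      · haveI : Nontrivial (Subgroup.center G) := hpg.center_nontrivial
        have hpgc : IsPGroup p (Subgroup.center G) := hpg.to_subgroup _
        haveI : Fintype (Subgroup.center G) := Fintype.ofFinite _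
        have hdvd : p ∣ Fintype.card (Subgroup.center G) := by
          rw [← Nat.card_eq_fintype_card]
          obtain ⟨m, hm⟩ := IsPGroup.iff_card.mp hpgc
          rcases m with _ | m
          · rw [pow_zero] at hm
            have h2 : 1 < Nat.card (Subgroup.center G) :=
              Finite.one_lt_card_iff_nontrivial.mpr inferInstance
            omega
          · rw [hm, pow_succ]
            exact dvd_mul_left p (p ^ m)
        obtain ⟨ζ, hζ⟩ := exists_prime_orderOf_dvd_card (G := Subgroup.center G) p hdvd
        have hzc : (ζ : G) ∈ Subgroup.center G := ζ.2
        have hzord : orderOf (ζ : G) = p := by rw [Subgroup.orderOf_coe]; exact hζ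
        haveI hnormal : (Subgroup.zpowers (ζ : G)).Normal := by
          constructor
          intro n' hn g
          obtain ⟨m, hm⟩ := Subgroup.mem_zpowers_iff.mp hn
          have hcm : (ζ : G) ^ m ∈ Subgroup.center G := Subgroup.zpow_mem _ hzc m
          have hcomm : g * (ζ : G) ^ m = (ζ : G) ^ m * g := Subgroup.mem_center_iff.mp hcm g
          rw [← hm, hcomm, mul_assoc, mul_inv_cancel, mul_one]
          exact Subgroup.zpow_mem _ (Subgroup.mem_zpowers _) m
        have hcardNz : Nat.card (Subgroup.zpowers (ζ : G)) = p := by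
          rw [Nat.card_zpowers, hzord]
        have hVNz : V (Subgroup.zpowers (ζ : G)) :=
          hiso _ _ hVC (mulEquivOfPrimeCardEq hcardC hcardNz)
        have hqlt : Nat.card (G ⧸ Subgroup.zpowers (ζ : G)) < n := by
          have hprod := Subgroup.card_eq_card_quotient_mul_card_subgroup
            (Subgroup.zpowers (ζ : G))
          rw [hcardNz] at hprod
          have hq0 : 0 < Nat.card (G ⧸ Subgroup.zpowers (ζ : G)) := Nat.card_pos
          have hp1 : 1 < p := hp.one_lt
          rw [← hcardG, hprod]
          nlinarith
        have hVQ : V (G ⧸ Subgroup.zpowers (ζ : G)) :=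
          ih _ hqlt _ rfl (hpg.to_quotient _)
        exact hec G _ hVNz hVQ
  constructor
  · intro α g hg
    obtain ⟨K, instG, instF, φ, hsurj, hpgK, hne⟩ := residually_p p hp α g hg
    exact ⟨K, instG, instF, φ, hsurj, hallp (Nat.card K) K rfl hpgK, hne⟩
  · intro p' hp' α g hg
    exact residually_p p' hp' α g hg
end

section
/- Let G be a group that is residually V, let K ≤ G be a retract of G, and let H ≤ K. Then the closure of H in the pro-V topology of G equals the closure of H in the pro-V topology of K. -/
/-- `G` is residually `V`: the trivial subgroup is closed in the pro-`V` topology. -/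
def ResiduallyV (V : GroupClass) (G : Type) [Group G] : Prop :=
  classClosure V (⊥ : Subgroup G) = ((⊥ : Subgroup G) : Set G)

theorem closure_in_retract (V : GroupClass) (hps : IsPseudovariety V)
    (G : Type) [Group G] (hres : ResiduallyV V G)
    (K : Subgroup G) (r : G →* G) (hrange : ∀ g : G, r g ∈ K)
    (hfix : ∀ k ∈ K, r k = k)
    (H : Subgroup G) (hHK : H ≤ K) :
    classClosure V H = Subtype.val '' classClosure V (H.subgroupOf K) := by
  have rK : G →* K := r.codRestrict K hrange
  ext x
  constructor
  · intro hx
    -- first, x ∈ K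
    have hxfix : r x = x := by
      have h1 : x⁻¹ * r x ∈ classClosure V (⊥ : Subgroup G) := by
        intro K' _ _ φ hV
        have hVp : V (K' × K') := hps.2.2.1 K' K' hV hV
        obtain ⟨h, hh, heq⟩ := hx (K' × K') (φ.prod (φ.comp r)) hVp
        have h1 : φ h = φ x := congrArg Prod.fst heq
        have h2 : φ (r h) = φ (r x) := congrArg Prod.snd heq
        rw [hfix h (hHK hh)] at h2
        rw [Subgroup.map_bot, Subgroup.mem_bot]
        rw [map_mul, map_inv, ← h1, h2]
        group
      rw [hres] at h1
      have := Subgroup.mem_bot.mp h1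
      have h2 : x * (x⁻¹ * r x) = x * 1 := by rw [this]
      simpa using h2
    have hxK : x ∈ K := hxfix ▸ hrange x
    refine ⟨⟨x, hxK⟩, ?_, rfl⟩
    intro K' _ _ ψ hV
    obtain ⟨h, hh, heq⟩ := hx K' (ψ.comp (r.codRestrict K hrange)) hV
    refine ⟨⟨h, hHK hh⟩, hh, ?_⟩
    have e1 : (r.codRestrict K hrange) h = ⟨h, hHK hh⟩ := by
      ext; exact hfix h (hHK hh)
    have e2 : (r.codRestrict K hrange) x = ⟨x, hxK⟩ := by
      ext; exact hxfix
    simpa [MonoidHom.comp_apply, e1, e2] using heq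
  · rintro ⟨⟨k, hk⟩, hcl, rfl⟩
    intro K' _ _ φ hV
    obtain ⟨⟨h, hhK⟩, hh, heq⟩ := hcl K' (φ.comp K.subtype) hV
    exact ⟨h, hh, heq⟩
end

section
/- Let P be a nonempty set of primes, F a free group, w ∈ F nontrivial with root u and exponent e. Then the pro-G_P closure of ⟨w⟩ in F is ⟨u^{ν_P(e)}⟩, where ν_P(e) is the largest divisor of e that is a product of primes in P. -/
namespace GPAux

open FreeGroup

variable {α : Type} [DecidableEq α]

/-- sign of a letter -/
def eps (b : Bool) : ℤ := if b then 1 else -1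

lemma eps_ne_zero (b : Bool) : eps b ≠ 0 := by cases b <;> simp [eps]

/-- group a word into syllables -/
def sylls : List (α × Bool) → List (α × ℤ)
  | [] => []
  | (a, b) :: t =>
    match sylls t with
    | [] => [(a, eps b)]
    | (a', e) :: rest =>
      if a = a' then (a, e + eps b) :: rest else (a, eps b) :: (a', e) :: rest

lemma sylls_cons_nil (a : α) (b : Bool) {t : List (α × Bool)} (h : sylls t = []) :
    sylls ((a, b) :: t) = [(a, eps b)] := by
  rw [sylls, h]

lemma sylls_cons_cons (a : α) (b : Bool) {t : List (α × Bool)} {a' : α} {e : ℤ}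
    {rest : List (α × ℤ)} (h : sylls t = (a', e) :: rest) :
    sylls ((a, b) :: t)
      = if a = a' then (a, e + eps b) :: rest else (a, eps b) :: (a', e) :: rest := by
  rw [sylls, h]

/-- no cancelling adjacent pair -/
def NoCancel (L : List (α × Bool)) : Prop :=
  ∀ (L₂ L₃ : List (α × Bool)) (x : α) (b : Bool), L ≠ L₂ ++ (x, b) :: (x, !b) :: L₃

lemma NoCancel.tail {x : α × Bool} {t : List (α × Bool)} (h : NoCancel (x :: t)) :
    NoCancel t := by
  intro L₂ L₃ a b he
  exact h (x :: L₂) L₃ a b (by simp [he])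

lemma noCancel_toWord (g : FreeGroup α) : NoCancel g.toWord := by
  intro L₂ L₃ x b he
  exact FreeGroup.reduce.not (p := False) ((reduce_toWord g).trans he)

lemma sylls_prod {G : Type*} [Group G] (f : α → G) :
    ∀ L : List (α × Bool),
      (L.map fun x => cond x.2 (f x.1) (f x.1)⁻¹).prod
        = ((sylls L).map fun be => f be.1 ^ be.2).prod := by
  intro L
  induction L with
  | nil => simp [sylls]
  | cons hd t ih =>
    obtain ⟨a, b⟩ := hd
    have hhd : cond b (f a) (f a)⁻¹ = f a ^ eps b := by cases b <;> simp [eps]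
    rw [List.map_cons, List.prod_cons, hhd, ih]
    rcases hs : sylls t with _ | ⟨⟨a', e⟩, rest⟩
    · rw [sylls_cons_nil a b hs]; simp
    · rw [sylls_cons_cons a b hs]
      by_cases haa : a = a'
      · subst haa
        rw [if_pos rfl]
        simp only [List.map_cons, List.prod_cons, ← mul_assoc, ← zpow_add, add_comm]
      · rw [if_neg haa]
        simp [List.map_cons, List.prod_cons, mul_assoc]

lemma sylls_eq_nil_iff (L : List (α × Bool)) : sylls L = [] ↔ L = [] := by
  constructor
  · intro h
    cases L with
    | nil => rfl
    | cons hd t =>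
      obtain ⟨a, b⟩ := hd
      rcases hs : sylls t with _ | ⟨⟨a', e⟩, rest⟩
      · rw [sylls_cons_nil a b hs] at h; simp at h
      · rw [sylls_cons_cons a b hs] at h
        by_cases haa : a = a' <;> simp [haa] at h
  · rintro rfl; rfl

lemma sylls_chain' (L : List (α × Bool)) :
    ((sylls L).map Prod.fst).Chain' (· ≠ ·) := by
  induction L with
  | nil => simp [sylls, List.Chain', List.isChain_nil]
  | cons hd t ih =>
    obtain ⟨a, b⟩ := hd
    rcases hs : sylls t with _ | ⟨⟨a', e⟩, rest⟩
    · rw [sylls_cons_nil a b hs]; simp [List.Chain', List.isChain_singleton]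
    · rw [hs] at ih
      rw [sylls_cons_cons a b hs]
      by_cases haa : a = a'
      · subst haa
        rw [if_pos rfl]
        simpa using ih
      · rw [if_neg haa]
        simp only [List.map_cons]
        exact List.IsChain.cons_cons haa (by simpa [List.Chain'] using ih)

lemma sign_step (e : ℤ) (b : Bool) (h : 0 < e * eps b) :
    0 < (e + eps b) * eps b ∧ (e + eps b).natAbs = e.natAbs + 1 ∧ e + eps b ≠ 0 := by
  cases b <;> simp only [eps, if_true, Bool.false_eq_true, if_false, mul_one, mul_neg_one,
    neg_pos, ne_eq] at h ⊢ <;> refine ⟨by omega, by omega, by omega⟩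

/-- main structural properties of syllables of a reduced word -/
lemma sylls_spec : ∀ (L : List (α × Bool)), NoCancel L →
    (∀ be ∈ sylls L, be.2 ≠ 0) ∧
    ((sylls L).map (fun be => be.2.natAbs)).sum ≤ L.length ∧
    (∀ a b t, L = (a, b) :: t →
      ∃ e rest, sylls L = (a, e) :: rest ∧ 0 < e * eps b) := by
  intro L
  induction L with
  | nil =>
    intro _
    refine ⟨by simp [sylls], by simp [sylls], ?_⟩
    intro a b t h; simp at h
  | cons hd t ih =>
    intro hnc
    obtain ⟨a, b⟩ := hd
    obtain ⟨ih1, ih2, ih3⟩ := ih hnc.tail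
    rcases hs : sylls t with _ | ⟨⟨a', e⟩, rest⟩
    · have hsy := sylls_cons_nil a b hs
      refine ⟨?_, ?_, ?_⟩
      · intro be hbe; rw [hsy] at hbe; simp only [List.mem_singleton] at hbe
        rw [hbe]; exact eps_ne_zero b
      · rw [hsy]; cases b <;> simp [eps]
      · intro a₀ b₀ t₀ h0
        simp only [List.cons.injEq, Prod.mk.injEq] at h0
        obtain ⟨⟨rfl, rfl⟩, rfl⟩ := h0
        exact ⟨eps b, [], hsy, by cases b <;> simp [eps]⟩
    · -- t nonempty
      have ht : t ≠ [] := by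
        intro h; rw [h] at hs; simp [sylls] at hs
      obtain ⟨⟨c, d⟩, t', rfl⟩ := List.exists_cons_of_ne_nil ht
      obtain ⟨e₁, rest₁, hsyl_t, hsign⟩ := ih3 c d t' rfl
      rw [hs] at hsyl_t
      simp only [List.cons.injEq, Prod.mk.injEq] at hsyl_t
      obtain ⟨⟨rfl, rfl⟩, rfl⟩ := hsyl_t
      rw [hs] at ih1 ih2
      by_cases haa : a = a'
      · -- merge case
        have hdb : d = b := by
          have h2 := hnc [] t' a b
          simp only [List.nil_append, ne_eq, List.cons.injEq, Prod.mk.injEq] at h2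
          subst haa
          cases d <;> cases b <;> simp_all
        rw [hdb] at hsign
        have hsy : sylls ((a, b) :: (a', d) :: t') = (a, e + eps b) :: rest := by
          rw [sylls_cons_cons a b hs, if_pos haa]
        obtain ⟨hsign', habs, hne'⟩ := sign_step e b hsign
        refine ⟨?_, ?_, ?_⟩
        · intro be hbe; rw [hsy] at hbe
          rcases List.mem_cons.mp hbe with h | h
          · rw [h]; exact hne'
          · exact ih1 be (List.mem_cons_of_mem _ h)
        · rw [hsy]
          simp only [List.map_cons, List.sum_cons, habs, List.length_cons] at ih2 ⊢
          omega
        · intro a₀ b₀ t₀ h0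
          simp only [List.cons.injEq, Prod.mk.injEq] at h0
          obtain ⟨⟨rfl, rfl⟩, rfl⟩ := h0
          exact ⟨e + eps b, rest, hsy, hsign'⟩
      · -- new syllable case
        have hsy : sylls ((a, b) :: (a', d) :: t') = (a, eps b) :: (a', e) :: rest := by
          rw [sylls_cons_cons a b hs, if_neg haa]
        refine ⟨?_, ?_, ?_⟩
        · intro be hbe; rw [hsy] at hbe
          rcases List.mem_cons.mp hbe with h | h
          · rw [h]; exact eps_ne_zero b
          · exact ih1 be h
        · rw [hsy]
          have habs : (eps b).natAbs = 1 := by cases b <;> simp [eps]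
          simp only [List.map_cons, List.sum_cons, habs, List.length_cons] at ih2 ⊢
          omega
        · intro a₀ b₀ t₀ h0
          simp only [List.cons.injEq, Prod.mk.injEq] at h0
          obtain ⟨⟨rfl, rfl⟩, rfl⟩ := h0
          exact ⟨eps b, (a', e) :: rest, hsy, by cases b <;> simp [eps]⟩

section MatrixPart

variable (q : ℕ) (syl : List (α × ℤ))

local notation "k" => syl.length
local notation "M" => Matrix (Fin (syl.length + 1)) (Fin (syl.length + 1)) (ZMod q)

/-- elementary strictly-upper nilpotent associated to a letter -/
def NN (b : α) : M :=
  Matrix.of fun x y =>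
    if (syl.map Prod.fst)[(x : ℕ)]? = some b ∧ (y : ℕ) = (x : ℕ) + 1 then 1 else 0

lemma NN_mul_NN (hch : (syl.map Prod.fst).Chain' (· ≠ ·)) (b : α) : NN q syl b * NN q syl b = 0 := by
  ext x y
  rw [Matrix.mul_apply]
  rw [Matrix.zero_apply]
  apply Finset.sum_eq_zero
  intro z _
  simp only [NN, Matrix.of_apply]
  by_cases h1 : (syl.map Prod.fst)[(x : ℕ)]? = some b ∧ (z : ℕ) = (x : ℕ) + 1
  · by_cases h2 : (syl.map Prod.fst)[(z : ℕ)]? = some b ∧ (y : ℕ) = (z : ℕ) + 1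
    · exfalso
      obtain ⟨hx, hz⟩ := h1
      obtain ⟨hz', _⟩ := h2
      rw [hz] at hz'
      rw [List.getElem?_eq_some_iff] at hx hz'
      obtain ⟨hlt1, hv1⟩ := hx
      obtain ⟨hlt2, hv2⟩ := hz'
      have := List.isChain_iff_getElem.mp hch (x : ℕ) (by omega)
      exact this (hv1.trans hv2.symm)
    · rw [if_neg h2, mul_zero]
  · rw [if_neg h1, zero_mul]

lemma one_add_smul_mul (hch : (syl.map Prod.fst).Chain' (· ≠ ·)) (b : α) (c d : ZMod q) :
    ((1 : M) + c • NN q syl b) * (1 + d • NN q syl b) = 1 + (c + d) • NN q syl b := by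
  rw [mul_add, mul_one, add_mul, one_mul, smul_mul_assoc, mul_smul_comm,
    NN_mul_NN q syl hch b, smul_zero, smul_zero, add_zero, add_smul]
  abel

variable (hch : (syl.map Prod.fst).Chain' (· ≠ ·))

/-- the unipotent unit attached to a letter -/
def UU (b : α) : Mˣ where
  val := 1 + (1 : ZMod q) • NN q syl b
  inv := 1 + (-1 : ZMod q) • NN q syl b
  val_inv := by rw [one_add_smul_mul q syl hch]; norm_num
  inv_val := by rw [one_add_smul_mul q syl hch]; norm_num

lemma UU_val (b : α) : ((UU q syl hch b : Mˣ) : M) = 1 + (1 : ZMod q) • NN q syl b := rfl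

lemma UU_inv (b : α) :
    ((((UU q syl hch b : Mˣ))⁻¹ : Mˣ) : M) = 1 + (-1 : ZMod q) • NN q syl b := rfl

lemma UU_zpow (b : α) : ∀ n : ℤ,
    ((UU q syl hch b ^ n : Mˣ) : M) = 1 + ((n : ℤ) : ZMod q) • NN q syl b := by
  intro n
  induction n using Int.induction_on with
  | zero => simp
  | succ n ih =>
    rw [zpow_add_one, Units.val_mul, ih, UU_val, one_add_smul_mul q syl hch]
    norm_cast
  | pred n ih =>
    rw [zpow_sub_one, Units.val_mul, ih, UU_inv, one_add_smul_mul q syl hch]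
    norm_cast

/-- factor of the Magnus-type product -/
def fac (be : α × ℤ) : M := 1 + ((be.2 : ZMod q)) • NN q syl be.1

/-- partial products -/
def QQ (s : List (α × ℤ)) : M := (s.map (fac q syl)).prod

lemma mul_NN_apply (T : M) (b : α) (x y : Fin (k + 1)) :
    (T * NN q syl b) x y =
      if h : 1 ≤ (y : ℕ) ∧ (syl.map Prod.fst)[(y : ℕ) - 1]? = some b then
        T x ⟨(y : ℕ) - 1, lt_of_le_of_lt (Nat.sub_le _ _) y.isLt⟩
      else 0 := by
  rw [Matrix.mul_apply]
  split
  · next h =>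
    obtain ⟨hy1, hy2⟩ := h
    have hsum := Finset.sum_eq_single
      (s := (Finset.univ : Finset (Fin (k+1))))
      (f := fun j => T x j * NN q syl b j y)
      (⟨(y : ℕ) - 1, lt_of_le_of_lt (Nat.sub_le _ _) y.isLt⟩ : Fin (k+1))
      (by
        intro z _ hz
        have hcond : ¬((syl.map Prod.fst)[(z : ℕ)]? = some b ∧ (y : ℕ) = (z : ℕ) + 1) := by
          rintro ⟨h1, h2⟩
          apply hz
          apply Fin.ext
          simp only
          omega
        simp only [NN, Matrix.of_apply, if_neg hcond, mul_zero])
      (by intro h; exact absurd (Finset.mem_univ _) h)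
    rw [hsum]
    simp only [NN, Matrix.of_apply]
    have hcond : (syl.map Prod.fst)[((y:ℕ)-1)]? = some b ∧ (y : ℕ) = ((y:ℕ) - 1) + 1 :=
      ⟨hy2, by omega⟩
    rw [if_pos hcond, mul_one]
  · next h =>
    apply Finset.sum_eq_zero
    intro z _
    have : ¬((syl.map Prod.fst)[(z : ℕ)]? = some b ∧ (y : ℕ) = (z : ℕ) + 1) := by
      rintro ⟨h1, h2⟩
      exact h ⟨by omega, by rw [show (y:ℕ) - 1 = (z:ℕ) by omega]; exact h1⟩
    simp only [NN, Matrix.of_apply, if_neg this, mul_zero]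

lemma mul_fac_apply (T : M) (be : α × ℤ) (x y : Fin (k + 1)) :
    (T * fac q syl be) x y = T x y +
      (be.2 : ZMod q) * (if h : 1 ≤ (y : ℕ) ∧ (syl.map Prod.fst)[(y : ℕ) - 1]? = some be.1 then
        T x ⟨(y : ℕ) - 1, lt_of_le_of_lt (Nat.sub_le _ _) y.isLt⟩
      else 0) := by
  rw [fac, mul_add, mul_one, Matrix.add_apply, Matrix.mul_smul, Matrix.smul_apply,
    mul_NN_apply, smul_eq_mul]

lemma QQ_take (t : ℕ) (ht : t ≤ k) :
    (∀ x y : Fin (k + 1), (x : ℕ) + t < (y : ℕ) → QQ q syl (syl.take t) x y = 0) ∧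
    (QQ q syl (syl.take t) ⟨0, by omega⟩ ⟨t, by omega⟩
      = ((syl.take t).map (fun be => (be.2 : ZMod q))).prod) := by
  induction t with
  | zero =>
    constructor
    · intro x y hxy
      rw [List.take_zero, QQ, List.map_nil, List.prod_nil]
      exact Matrix.one_apply_ne (by intro h; rw [h] at hxy; omega)
    · rw [List.take_zero, QQ, List.map_nil, List.prod_nil, List.map_nil, List.prod_nil]
      exact Matrix.one_apply_eq _
  | succ t iht =>
    have htlt : t < k := by omega
    obtain ⟨ih1, ih2⟩ := iht (by omega)
    have htake : syl.take (t + 1) = syl.take t ++ [syl[t]] := by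
      rw [List.take_succ, List.getElem?_eq_getElem htlt]
      rfl
    have hQQ : QQ q syl (syl.take (t+1)) = QQ q syl (syl.take t) * fac q syl syl[t] := by
      rw [htake, QQ, QQ, List.map_append, List.prod_append, List.map_singleton,
        List.prod_singleton]
    constructor
    · intro x y hxy
      rw [hQQ, mul_fac_apply]
      rw [ih1 x y (by omega)]
      split
      · next h =>
        rw [ih1 x _ (by simp only; omega), mul_zero, add_zero]
      · rw [mul_zero, add_zero]
    · rw [hQQ, mul_fac_apply]
      rw [ih1 _ _ (by simp only; omega)]
      have hcond : 1 ≤ ((⟨t+1, by omega⟩ : Fin (k+1)) : ℕ) ∧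
          (syl.map Prod.fst)[((⟨t+1, by omega⟩ : Fin (k+1)) : ℕ) - 1]? = some (syl[t]).1 := by
        constructor
        · simp
        · simp only [Nat.add_sub_cancel]
          rw [List.getElem?_map, List.getElem?_eq_getElem htlt]
          rfl
      rw [dif_pos hcond]
      have hfin : (⟨((⟨t+1, by omega⟩ : Fin (k+1)) : ℕ) - 1,
          lt_of_le_of_lt (Nat.sub_le _ _) (Fin.isLt _)⟩ : Fin (k+1)) = ⟨t, by omega⟩ := by
        apply Fin.ext; simp
      rw [hfin, ih2, htake, List.map_append, List.prod_append, List.map_singleton,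
        List.prod_singleton, zero_add, mul_comm]

end MatrixPart

section StrPart

variable (q : ℕ) (syl : List (α × ℤ))

local notation "k" => syl.length
local notation "M" => Matrix (Fin (syl.length + 1)) (Fin (syl.length + 1)) (ZMod q)

/-- strictly upper triangular -/
def Str (B : M) : Prop := ∀ x y : Fin (k + 1), B x y ≠ 0 → (x : ℕ) < (y : ℕ)

lemma str_zero : Str q syl 0 := by
  intro x y h; exact absurd (Matrix.zero_apply _ _) h

lemma str_add {A B : M} (ha : Str q syl A) (hb : Str q syl B) : Str q syl (A + B) := by
  intro x y h
  rw [Matrix.add_apply] at h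
  by_cases h1 : A x y = 0
  · exact hb x y (by intro h2; rw [h1, h2, add_zero] at h; exact h rfl)
  · exact ha x y h1

lemma str_neg {A : M} (ha : Str q syl A) : Str q syl (-A) := by
  intro x y h
  exact ha x y (by intro h1; rw [Matrix.neg_apply, h1, neg_zero] at h; exact h rfl)

lemma str_mul {A B : M} (ha : Str q syl A) (hb : Str q syl B) : Str q syl (A * B) := by
  intro x y h
  rw [Matrix.mul_apply] at h
  obtain ⟨z, _, hz⟩ := Finset.exists_ne_zero_of_sum_ne_zero h
  have h1 : A x z ≠ 0 := by intro h0; rw [h0, zero_mul] at hz; exact hz rfl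
  have h2 : B z y ≠ 0 := by intro h0; rw [h0, mul_zero] at hz; exact hz rfl
  exact lt_trans (ha x z h1) (hb z y h2)

lemma str_pow {A : M} (ha : Str q syl A) : ∀ i : ℕ, Str q syl (A ^ (i + 1)) := by
  intro i
  induction i with
  | zero => rw [pow_one]; exact ha
  | succ i ih => rw [pow_succ]; exact str_mul q syl ih ha

lemma str_sum {n : ℕ} {f : ℕ → M} (hf : ∀ i, Str q syl (f i)) :
    Str q syl (∑ i ∈ Finset.range n, f i) := by
  intro x y h
  rw [Matrix.sum_apply] at h
  obtain ⟨z, _, hz⟩ := Finset.exists_ne_zero_of_sum_ne_zero h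
  exact hf z x y hz

lemma str_pow_bound {A : M} (ha : Str q syl A) :
    ∀ (j : ℕ) (x y : Fin (k + 1)), (A ^ j) x y ≠ 0 → (x : ℕ) + j ≤ (y : ℕ) := by
  intro j
  induction j with
  | zero =>
    intro x y h
    rw [pow_zero] at h
    have : x = y := by
      by_contra hne
      exact h (Matrix.one_apply_ne hne)
    rw [this]; omega
  | succ j ih =>
    intro x y h
    rw [pow_succ, Matrix.mul_apply] at h
    obtain ⟨z, _, hz⟩ := Finset.exists_ne_zero_of_sum_ne_zero h
    have h1 : (A ^ j) x z ≠ 0 := by intro h0; rw [h0, zero_mul] at hz; exact hz rfl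
    have h2 : A z y ≠ 0 := by intro h0; rw [h0, mul_zero] at hz; exact hz rfl
    have := ih x z h1
    have := ha z y h2
    omega

lemma str_nilpotent {A : M} (ha : Str q syl A) : A ^ (k + 1) = 0 := by
  ext x y
  rw [Matrix.zero_apply]
  by_contra h
  have := str_pow_bound q syl ha (k + 1) x y h
  have := y.isLt
  omega

/-- inverse of a unipotent matrix -/
def geo (B : M) : M := ∑ i ∈ Finset.range (k + 2), (-B) ^ i

lemma negpow_top {B : M} (hb : Str q syl B) : (-B) ^ (k + 2) = 0 := by
  have h1 : B ^ (k + 2) = 0 := by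
    rw [pow_succ, str_nilpotent q syl hb, zero_mul]
  rw [neg_pow, h1, mul_zero]

lemma mul_geo {B : M} (hb : Str q syl B) : (1 + B) * geo q syl B = 1 := by
  have h := mul_geom_sum (-B) (k + 2)
  rw [negpow_top q syl hb, zero_sub] at h
  have h2 : (1 + B : M) = -(-B - 1) := by abel
  rw [h2, neg_mul, geo, h, neg_neg]

lemma geo_mul {B : M} (hb : Str q syl B) : geo q syl B * (1 + B) = 1 := by
  have h := geom_sum_mul (-B) (k + 2)
  rw [negpow_top q syl hb, zero_sub] at h
  have h2 : (1 + B : M) = -(-B - 1) := by abel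
  rw [h2, mul_neg, geo, h, neg_neg]

lemma geo_eq (B : M) : geo q syl B = 1 + ∑ i ∈ Finset.range (k + 1), (-B) ^ (i + 1) := by
  rw [geo, Finset.sum_range_succ']
  simp [add_comm]

lemma str_geo_sub {B : M} (hb : Str q syl B) : Str q syl (geo q syl B - 1) := by
  have h2 : geo q syl B - 1 = ∑ i ∈ Finset.range (k + 1), (-B) ^ (i + 1) := by
    rw [geo_eq]; abel
  rw [h2]
  exact str_sum q syl (fun i => str_pow q syl (str_neg q syl hb) i)

lemma mul_geo' (X : M) (h : Str q syl (X - 1)) : X * geo q syl (X - 1) = 1 := by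
  have h2 := mul_geo q syl h
  have hA : (1 : M) + (X - 1) = X := by abel
  rwa [hA] at h2

lemma geo_mul' (X : M) (h : Str q syl (X - 1)) : geo q syl (X - 1) * X = 1 := by
  have h2 := geo_mul q syl h
  have hA : (1 : M) + (X - 1) = X := by abel
  rwa [hA] at h2

/-- the unitriangular subgroup -/
def KK : Subgroup (Mˣ) where
  carrier := {A : Mˣ | Str q syl ((A : M) - 1)}
  one_mem' := by
    simp only [Set.mem_setOf_eq, Units.val_one, sub_self]
    exact str_zero q syl
  mul_mem' := by
    intro A B ha hb
    simp only [Set.mem_setOf_eq, Units.val_mul] at *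
    have hid : (A : M) * (B : M) - 1
        = ((A : M) - 1) * ((B : M) - 1) + (((A : M) - 1) + ((B : M) - 1)) := by noncomm_ring
    rw [hid]
    exact str_add q syl (str_mul q syl ha hb) (str_add q syl ha hb)
  inv_mem' := by
    intro A ha
    simp only [Set.mem_setOf_eq] at *
    have hinv : ((A⁻¹ : Mˣ) : M) = geo q syl ((A : M) - 1) :=
      Units.inv_eq_of_mul_eq_one_right (mul_geo' q syl _ ha)
    rw [hinv]
    exact str_geo_sub q syl ha

lemma UU_mem (hch : (syl.map Prod.fst).Chain' (· ≠ ·)) (b : α) :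
    UU q syl hch b ∈ KK q syl := by
  show Str q syl _
  rw [UU_val]
  intro x y h
  have h2 : ((1 : ZMod q) • NN q syl b) x y ≠ 0 := by
    intro h0
    rw [add_sub_cancel_left] at h
    exact h h0
  rw [Matrix.smul_apply, one_smul, NN, Matrix.of_apply] at h2
  by_cases hc : (syl.map Prod.fst)[(x : ℕ)]? = some b ∧ (y : ℕ) = (x : ℕ) + 1
  · omega
  · rw [if_neg hc] at h2; exact absurd rfl h2

/-- the subgroup is in bijection with strict matrices -/
noncomputable def strEquiv : KK q syl ≃ {B : M // Str q syl B} where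
  toFun A := ⟨(A.1 : M) - 1, A.2⟩
  invFun B := ⟨⟨1 + B.1, geo q syl B.1, mul_geo q syl B.2, geo_mul q syl B.2⟩,
    by show Str q syl _; rw [Units.val_mk, add_sub_cancel_left]; exact B.2⟩
  left_inv A := by
    apply Subtype.ext
    apply Units.ext
    show 1 + ((A.1 : M) - 1) = (A.1 : M)
    abel
  right_inv B := by
    apply Subtype.ext
    show (1 + B.1) - 1 = B.1
    abel

/-- additive group of strict matrices -/
def StrAdd : AddSubgroup M where
  carrier := {B : M | Str q syl B}
  zero_mem' := str_zero q syl
  add_mem' := str_add q syl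
  neg_mem' := str_neg q syl

lemma card_KK_prime [NeZero q] (r : ℕ) (hr : r.Prime) (hd : r ∣ Nat.card (KK q syl)) :
    r ∣ q := by
  have h1 : Nat.card (KK q syl) = Nat.card (Multiplicative (StrAdd q syl)) := by
    apply Nat.card_congr
    exact (strEquiv q syl).trans
      ((Equiv.subtypeEquivRight (fun B => Iff.rfl)).trans Multiplicative.ofAdd)
  rw [h1] at hd
  haveI : Fact r.Prime := ⟨hr⟩
  obtain ⟨x, hx⟩ := exists_prime_orderOf_dvd_card' (G := Multiplicative (StrAdd q syl)) r hd
  have hxq : x ^ q = 1 := by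
    apply Multiplicative.toAdd.injective
    rw [toAdd_pow, toAdd_one]
    apply Subtype.ext
    rw [AddSubmonoidClass.coe_nsmul, ZeroMemClass.coe_zero]
    ext a b
    simp [nsmul_eq_mul, ZMod.natCast_self]
  rw [← hx]
  exact orderOf_dvd_of_pow_eq_one hxq

end StrPart

section Resp

lemma natAbs_list_prod : ∀ l : List ℤ, l.prod.natAbs = (l.map Int.natAbs).prod := by
  intro l
  induction l with
  | nil => simp
  | cons a l ih => simp [Int.natAbs_mul, ih]

lemma units_val_list_prod {M : Type*} [Monoid M] :
    ∀ l : List Mˣ, ((l.prod : Mˣ) : M) = (l.map Units.val).prod := by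
  intro l
  induction l with
  | nil => simp
  | cons a l ih => rw [List.prod_cons, Units.val_mul, ih, List.map_cons, List.prod_cons]

lemma int_cast_list_prod {R : Type*} [CommRing R] :
    ∀ l : List ℤ, ((l.prod : ℤ) : R) = (l.map (fun n : ℤ => (n : R))).prod := by
  intro l
  induction l with
  | nil => simp
  | cons a l ih => rw [List.prod_cons, Int.cast_mul, ih, List.map_cons, List.prod_cons]

lemma nat_prod_le_two_pow_sum : ∀ l : List ℕ, l.prod ≤ 2 ^ l.sum := by
  intro l
  induction l with
  | nil => simp
  | cons a l ih =>
    rw [List.prod_cons, List.sum_cons, pow_add]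
    exact Nat.mul_le_mul (le_of_lt (Nat.lt_two_pow_self (n := a))) ih

/-- Free groups are residually `p` for every prime `p`. -/
theorem residually_p {α : Type} (p : ℕ) (hp : p.Prime) (g : FreeGroup α) (hg : g ≠ 1) :
    ∃ (K : Type) (_ : Group K) (_ : Finite K) (φ : FreeGroup α →* K),
      (∀ r : ℕ, r.Prime → r ∣ Nat.card K → r = p) ∧ φ g ≠ 1 := by
  classical
  set L := g.toWord with hL
  have hnc : NoCancel L := noCancel_toWord g
  set syl := sylls L with hsyl
  obtain ⟨h1, h2, -⟩ := sylls_spec L hnc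
  have hLne : L ≠ [] := fun h => hg (FreeGroup.toWord_eq_nil_iff.mp h)
  have hsylne : syl ≠ [] := fun h => hLne ((sylls_eq_nil_iff L).mp h)
  set m := L.length + 1 with hm
  set q := p ^ m with hq
  haveI : NeZero q := ⟨pow_ne_zero _ hp.pos.ne'⟩
  have hch : (syl.map Prod.fst).Chain' (· ≠ ·) := sylls_chain' L
  set E : ℤ := (syl.map (fun be => be.2)).prod with hE
  have hEne : E ≠ 0 := by
    apply List.prod_ne_zero
    intro h0
    obtain ⟨be, hbe, hbe2⟩ := List.mem_map.mp h0
    exact h1 be hbe hbe2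
  have hEbound : E.natAbs < q := by
    have e1 : E.natAbs = (syl.map (fun be => be.2.natAbs)).prod := by
      rw [hE, natAbs_list_prod, List.map_map]
      rfl
    have e2 : (syl.map (fun be => be.2.natAbs)).prod
        ≤ 2 ^ ((syl.map (fun be => be.2.natAbs)).sum) := nat_prod_le_two_pow_sum _
    have e3 : (2:ℕ) ^ ((syl.map (fun be => be.2.natAbs)).sum) ≤ 2 ^ L.length :=
      Nat.pow_le_pow_right (by norm_num) h2
    have e4 : (2:ℕ) ^ L.length < 2 ^ m := by
      apply Nat.pow_lt_pow_right (by norm_num)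
      omega
    have e5 : (2:ℕ) ^ m ≤ p ^ m := Nat.pow_le_pow_left hp.two_le _
    omega
  -- the homomorphism
  set φ0 : FreeGroup α →* (Matrix (Fin (syl.length + 1)) (Fin (syl.length + 1)) (ZMod q))ˣ :=
    FreeGroup.lift (fun a => UU q syl hch a) with hφ0
  have hmem : ∀ x, φ0 x ∈ KK q syl := by
    intro x
    induction x using FreeGroup.induction_on with
    | C1 => rw [_root_.map_one]; exact one_mem _
    | of a =>
      have hpa : (pure a : FreeGroup α) = FreeGroup.of a := rfl
      rw [hφ0, FreeGroup.lift_apply_of]; exact UU_mem q syl hch a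
    | inv_of a ih => rw [_root_.map_inv]; exact inv_mem ih
    | mul x y ihx ihy => rw [_root_.map_mul]; exact mul_mem ihx ihy
  set φ : FreeGroup α →* (KK q syl) := φ0.codRestrict (KK q syl) hmem with hφ
  refine ⟨KK q syl, inferInstance, inferInstance, φ, ?_, ?_⟩
  · intro r hr hd
    have hrq := card_KK_prime q syl r hr hd
    rw [hq] at hrq
    exact (Nat.prime_dvd_prime_iff_eq hr hp).mp (hr.dvd_of_dvd_pow hrq)
  · intro hone
    have hgprod : φ0 g = ((sylls L).map fun be => UU q syl hch be.1 ^ be.2).prod := by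
      conv_lhs => rw [show g = FreeGroup.mk L from (FreeGroup.mk_toWord).symm]
      rw [hφ0, FreeGroup.lift_mk, sylls_prod]
    have hval : ((φ0 g : _ˣ) : Matrix (Fin (syl.length + 1)) (Fin (syl.length + 1)) (ZMod q))
        = QQ q syl syl := by
      rw [hgprod, units_val_list_prod, List.map_map]
      have hfac : (Units.val ∘ fun be : α × ℤ => UU q syl hch be.1 ^ be.2)
          = fac q syl := by
        funext be
        simp only [Function.comp_apply]
        rw [UU_zpow]
        rfl
      rw [hfac]
      rfl
    have hk1 : 1 ≤ syl.length := List.length_pos_iff.mpr hsylne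
    have hentry := (QQ_take q syl syl.length le_rfl).2
    rw [List.take_length] at hentry
    have hcast : ((syl.map (fun be => ((be.2 : ℤ) : ZMod q))).prod) = ((E : ℤ) : ZMod q) := by
      rw [hE, int_cast_list_prod, List.map_map]
      rfl
    have hzero : ((E : ℤ) : ZMod q) = 0 := by
      rw [← hcast, ← hentry, ← hval]
      have h10 : φ0 g = 1 := by
        have h11 : ((φ g : KK q syl) : _ˣ) = φ0 g := rfl
        rw [hone, OneMemClass.coe_one] at h11
        exact h11.symm
      rw [h10, Units.val_one]
      exact Matrix.one_apply_ne (by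
        intro hcontra
        have := congrArg Fin.val hcontra
        simp only at this
        omega)
    rw [ZMod.intCast_zmod_eq_zero_iff_dvd] at hzero
    have hq_dvd : q ∣ E.natAbs := by
      have := Int.natAbs_dvd_natAbs.mpr hzero
      simpa using this
    have : q ≤ E.natAbs := Nat.le_of_dvd (Int.natAbs_pos.mpr hEne) hq_dvd
    omega

end Resp

/-- free groups are torsion-free -/
lemma fg_pow_ne_one {g : FreeGroup α} (hg : g ≠ 1) {n : ℕ} (hn : n ≠ 0) : g ^ n ≠ 1 := by
  intro hgn
  obtain ⟨p, hpn, hp⟩ := Nat.exists_infinite_primes (n + 1)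
  obtain ⟨K, _, _, φ, hK, hφg⟩ := residually_p p hp g hg
  have h1 : (φ g) ^ n = 1 := by rw [← _root_.map_pow, hgn, _root_.map_one]
  have h2 : orderOf (φ g) ∣ n := orderOf_dvd_of_pow_eq_one h1
  have h3 : orderOf (φ g) ≠ 1 := fun h => hφg (orderOf_eq_one_iff.mp h)
  obtain ⟨r, hr, hrd⟩ := Nat.exists_prime_and_dvd h3
  have h4 : r ∣ Nat.card K := hrd.trans (orderOf_dvd_natCard _)
  have h5 : p ∣ n := (hK r hr h4) ▸ hrd.trans h2
  have := Nat.le_of_dvd (Nat.pos_of_ne_zero hn) h5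
  omega

lemma invRev_append (L1 L2 : List (α × Bool)) :
    FreeGroup.invRev (L1 ++ L2) = FreeGroup.invRev L2 ++ FreeGroup.invRev L1 := by
  simp [FreeGroup.invRev]

lemma invRev_cons (x : α × Bool) (l : List (α × Bool)) :
    FreeGroup.invRev (x :: l) = FreeGroup.invRev l ++ [(x.1, !x.2)] := by
  simp [FreeGroup.invRev]

/-- a nontrivial central element forces at most one generator -/
lemma central_subsingleton [DecidableEq α] {c : FreeGroup α} (hc : c ≠ 1)
    (hcent : ∀ g : FreeGroup α, c * g = g * c) (a b : α) : a = b := by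
  by_contra hab
  have hLred : FreeGroup.reduce c.toWord = c.toWord := FreeGroup.reduce_toWord c
  have hLne : c.toWord ≠ [] := fun h => hc (FreeGroup.toWord_eq_nil_iff.mp h)
  obtain ⟨⟨s, ε⟩, L', hLcons⟩ := List.exists_cons_of_ne_nil hLne
  set y := c.toWord.getLast hLne with hy
  set r : α := if a = s then b else a with hr
  have hrs : r ≠ s := by
    by_cases h : a = s
    · rw [hr, if_pos h]
      intro hbs
      exact hab (h.trans hbs.symm)
    · rw [hr, if_neg h]
      exact h
  set ρ : Bool := if y.1 = r then y.2 else true with hρ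
  set z : FreeGroup α := FreeGroup.mk [(r, ρ)] with hz
  -- left multiplication
  have h1 : (z * c).toWord = (r, ρ) :: c.toWord := by
    conv_lhs => rw [show c = FreeGroup.mk c.toWord from FreeGroup.mk_toWord.symm]
    rw [hz, FreeGroup.mul_mk]
    show (FreeGroup.mk ((r, ρ) :: c.toWord)).toWord = _
    rw [FreeGroup.toWord_mk, FreeGroup.reduce.cons, hLred, hLcons]
    have hcond : ¬((r, ρ).1 = (s, ε).1 ∧ (r, ρ).2 = !(s, ε).2) := fun h => hrs h.1
    simp only [if_neg hcond]
  -- right multiplication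
  have hLsplit : c.toWord = c.toWord.dropLast ++ [y] := (List.dropLast_append_getLast hLne).symm
  have hinvL : FreeGroup.invRev c.toWord = (y.1, !y.2) :: FreeGroup.invRev c.toWord.dropLast := by
    conv_lhs => rw [hLsplit]
    rw [invRev_append]
    simp [FreeGroup.invRev]
  have hinvred : FreeGroup.reduce (FreeGroup.invRev c.toWord) = FreeGroup.invRev c.toWord := by
    rw [FreeGroup.reduce_invRev, hLred]
  have h2 : (c * z).toWord = c.toWord ++ [(r, ρ)] := by
    conv_lhs => rw [show c = FreeGroup.mk c.toWord from FreeGroup.mk_toWord.symm]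
    rw [hz, FreeGroup.mul_mk]
    rw [FreeGroup.toWord_mk]
    have e1 : FreeGroup.invRev (c.toWord ++ [(r, ρ)])
        = (r, !ρ) :: FreeGroup.invRev c.toWord := by
      rw [invRev_append]
      simp [FreeGroup.invRev]
    have e4 : FreeGroup.reduce ((r, !ρ) :: FreeGroup.invRev c.toWord)
        = (r, !ρ) :: FreeGroup.invRev c.toWord := by
      rw [FreeGroup.reduce.cons, hinvred, hinvL]
      have hcond : ¬((r, !ρ).1 = (y.1, !y.2).1 ∧ (r, !ρ).2 = !(y.1, !y.2).2) := by
        rintro ⟨hc1, hc2⟩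
        simp only at hc1 hc2
        rw [Bool.not_not] at hc2
        rw [hρ, if_pos (hc1.symm)] at hc2
        exact (Bool.not_ne_self y.2) (by rw [hc2])
      simp only [if_neg hcond]
    have e5 : FreeGroup.reduce (c.toWord ++ [(r, ρ)])
        = FreeGroup.invRev (FreeGroup.reduce (FreeGroup.invRev (c.toWord ++ [(r, ρ)]))) := by
      rw [FreeGroup.reduce_invRev, FreeGroup.invRev_invRev]
    rw [e5, e1, e4, invRev_cons, FreeGroup.invRev_invRev]
    simp
  -- compare
  have hzc : z * c = c * z := (hcent z).symm
  have hwords : (r, ρ) :: c.toWord = c.toWord ++ [(r, ρ)] := by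
    rw [← h1, ← h2, hzc]
  rw [hLcons] at hwords
  simp only [List.cons_append, List.cons.injEq, Prod.mk.injEq] at hwords
  exact hrs hwords.1.1

/-- a subgroup containing a nontrivial element commuting with everything is cyclic -/
lemma exists_le_zpowers (H : Subgroup (FreeGroup α)) (c : FreeGroup α)
    (hcH : c ∈ H) (hc1 : c ≠ 1) (hcomm : ∀ h ∈ H, c * h = h * c) :
    ∃ z : FreeGroup α, H ≤ Subgroup.zpowers z := by
  classical
  set e : H ≃* FreeGroup (IsFreeGroup.Generators H) := IsFreeGroup.toFreeGroup (G := H)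
    with he
  set c' := e ⟨c, hcH⟩ with hc'
  have hc'1 : c' ≠ 1 := by
    intro h
    apply hc1
    have h2 : (⟨c, hcH⟩ : H) = 1 := e.injective (by rw [_root_.map_one, ← h, hc'])
    exact congrArg Subtype.val h2
  have hcent : ∀ g' : FreeGroup (IsFreeGroup.Generators H), c' * g' = g' * c' := by
    intro g'
    obtain ⟨h, rfl⟩ := e.surjective g'
    rw [← _root_.map_mul, ← _root_.map_mul]
    congr 1
    apply Subtype.ext
    exact hcomm h.1 h.2
  rcases isEmpty_or_nonempty (IsFreeGroup.Generators H) with hemp | ⟨⟨x0⟩⟩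
  · refine ⟨1, ?_⟩
    intro h hh
    have htriv : ∀ g : FreeGroup (IsFreeGroup.Generators H), g = 1 := by
      intro g
      induction g using FreeGroup.induction_on with
      | C1 => rfl
      | of x => exact hemp.elim x
      | inv_of x _ => exact hemp.elim x
      | mul x y hx hy => rw [hx, hy, one_mul]
    have h2 : (⟨h, hh⟩ : H) = 1 := e.injective (by rw [htriv (e ⟨h, hh⟩), _root_.map_one])
    have h3 : h = 1 := congrArg Subtype.val h2
    rw [h3]; exact one_mem _
  · have hsub : ∀ y : IsFreeGroup.Generators H, y = x0 :=
      fun y => central_subsingleton hc'1 hcent y x0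
    have hgen : ∀ g : FreeGroup (IsFreeGroup.Generators H),
        g ∈ Subgroup.zpowers (FreeGroup.of x0) := by
      intro g
      induction g using FreeGroup.induction_on with
      | C1 => exact one_mem _
      | of x =>
        have hx : (pure x : FreeGroup _) = FreeGroup.of x := rfl
        rw [hsub x]
        exact Subgroup.mem_zpowers _
      | inv_of x hx => exact inv_mem hx
      | mul x y hx hy => exact mul_mem hx hy
    refine ⟨((e.symm (FreeGroup.of x0)) : H), ?_⟩
    intro h hh
    obtain ⟨n, hn⟩ := Subgroup.mem_zpowers_iff.mp (hgen (e ⟨h, hh⟩))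
    have h2 : (⟨h, hh⟩ : H) = (e.symm (FreeGroup.of x0)) ^ n := by
      apply e.injective
      rw [map_zpow, MulEquiv.apply_symm_apply, hn]
    rw [Subgroup.mem_zpowers_iff]
    refine ⟨n, ?_⟩
    have h3 := congrArg Subtype.val h2
    rw [SubgroupClass.coe_zpow] at h3
    exact h3.symm

/-- an element commuting with `w` is a power of the root of `w` -/
lemma commute_mem_zpowers_root {w u : FreeGroup α} {e : ℕ} (hw : w ≠ 1)
    (hre : IsRootExp w u e) {x : FreeGroup α} (hx : x * w = w * x) :
    x ∈ Subgroup.zpowers u := by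
  obtain ⟨he1, hwe, hmax⟩ := hre
  have hu1 : u ≠ 1 := fun h => hw (by rw [hwe, h, one_pow])
  -- step 1: common root of x and w
  set H1 := Subgroup.closure ({x, w} : Set (FreeGroup α)) with hH1
  have hwH1 : w ∈ H1 := Subgroup.subset_closure (by simp)
  have hxH1 : x ∈ H1 := Subgroup.subset_closure (by simp)
  have hcent1 : H1 ≤ Subgroup.centralizer {w} := by
    rw [hH1, Subgroup.closure_le]
    intro y hy
    simp only [Set.mem_insert_iff, Set.mem_singleton_iff] at hy
    rcases hy with rfl | rfl
    · exact Subgroup.mem_centralizer_iff.mpr (by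
        intro g hg
        simp only [Set.mem_singleton_iff] at hg
        rw [hg, hx])
    · exact Subgroup.mem_centralizer_iff.mpr (by
        intro g hg
        simp only [Set.mem_singleton_iff] at hg
        rw [hg])
  have hcomm1 : ∀ h ∈ H1, w * h = h * w := by
    intro h hh
    have := Subgroup.mem_centralizer_iff.mp (hcent1 hh) w (by simp)
    exact this
  obtain ⟨v, hv⟩ := exists_le_zpowers H1 w hwH1 hw hcomm1
  obtain ⟨s, hs⟩ := Subgroup.mem_zpowers_iff.mp (hv hxH1)
  obtain ⟨t, htv⟩ := Subgroup.mem_zpowers_iff.mp (hv hwH1)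
  -- step 2: common root of u and v
  set H2 := Subgroup.closure ({u, v} : Set (FreeGroup α)) with hH2
  have huH2 : u ∈ H2 := Subgroup.subset_closure (by simp)
  have hvH2 : v ∈ H2 := Subgroup.subset_closure (by simp)
  have hwH2 : w ∈ H2 := by rw [← htv]; exact Subgroup.zpow_mem H2 hvH2 t
  have hcent2 : H2 ≤ Subgroup.centralizer {w} := by
    rw [hH2, Subgroup.closure_le]
    intro y hy
    simp only [Set.mem_insert_iff, Set.mem_singleton_iff] at hy
    rcases hy with rfl | rfl
    · exact Subgroup.mem_centralizer_iff.mpr (by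
        intro g hg
        simp only [Set.mem_singleton_iff] at hg
        rw [hg, hwe]
        exact ((Commute.refl y).pow_left e).eq)
    · exact Subgroup.mem_centralizer_iff.mpr (by
        intro g hg
        simp only [Set.mem_singleton_iff] at hg
        rw [hg, ← htv]
        exact ((Commute.refl y).zpow_left t).eq)
  have hcomm2 : ∀ h ∈ H2, w * h = h * w := by
    intro h hh
    exact Subgroup.mem_centralizer_iff.mp (hcent2 hh) w (by simp)
  obtain ⟨z, hz⟩ := exists_le_zpowers H2 w hwH2 hw hcomm2
  obtain ⟨av, hav⟩ := Subgroup.mem_zpowers_iff.mp (hz huH2)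
  obtain ⟨bv, hbv⟩ := Subgroup.mem_zpowers_iff.mp (hz hvH2)
  have haz : av ≠ 0 := fun h => hu1 (by rw [← hav, h, zpow_zero])
  have hwz : w = z ^ (av * (e : ℤ)) := by
    rw [hwe, ← hav, ← zpow_natCast (z ^ av) e, ← zpow_mul]
  have habs : (av * (e : ℤ)).natAbs ≤ e := by
    rcases Int.natAbs_eq (av * (e : ℤ)) with h | h
    · refine hmax z ((av * (e : ℤ)).natAbs) ?_
      rw [hwz]
      conv_lhs => rw [h]
      rw [zpow_natCast]
    · refine hmax z⁻¹ ((av * (e : ℤ)).natAbs) ?_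
      rw [hwz]
      conv_lhs => rw [h]
      rw [zpow_neg, zpow_natCast, inv_pow]
  have hae : av.natAbs = 1 := by
    have h1 : av.natAbs * e ≤ e := by
      have h2 : (av * (e : ℤ)).natAbs = av.natAbs * e := by
        rw [Int.natAbs_mul, Int.natAbs_natCast]
      omega
    have h3 : av.natAbs ≠ 0 := Int.natAbs_ne_zero.mpr haz
    rcases Nat.lt_or_ge av.natAbs 2 with h4 | h4
    · omega
    · exfalso
      have h5 : 2 * e ≤ av.natAbs * e := Nat.mul_le_mul_right e h4
      omega
  have hzu : Subgroup.zpowers z = Subgroup.zpowers u := by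
    rcases Int.natAbs_eq av with h | h
    · rw [hae] at h
      rw [← hav, h]
      norm_num
    · rw [hae] at h
      rw [← hav, h]
      show _ = Subgroup.zpowers (z ^ (-1 : ℤ))
      rw [zpow_neg, zpow_one, Subgroup.zpowers_inv]
  rw [← hzu, ← hs, ← hbv, ← zpow_mul]
  exact Subgroup.zpow_mem_zpowers z _


end GPAux

/-- The closure of the subgroup `H` in the pro-`G_P` topology on `G`, where `G_P`
is the class of finite groups whose order is a product of primes in `P`. -/
def GPClosure (P : Set ℕ) {G : Type} [Group G] (H : Subgroup G) : Set G :=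
  { x | ∀ (K : Type) [Group K] [Finite K] (φ : G →* K),
      (∀ q : ℕ, q.Prime → q ∣ Nat.card K → q ∈ P) → φ x ∈ H.map φ }

open GPAux in
theorem cyclic_GP_closure (P : Set ℕ) (hPne : P.Nonempty) (hPp : ∀ p ∈ P, p.Prime)
    (α : Type) (w u : FreeGroup α) (e : ℕ) (hw : w ≠ 1) (hre : IsRootExp w u e)
    (ν : ℕ) (hν : IsGreatest {d : ℕ | d ∣ e ∧ ∀ q ∈ d.primeFactors, q ∈ P} ν) :
    GPClosure P (Subgroup.zpowers w) = (Subgroup.zpowers (u ^ ν) : Set (FreeGroup α)) := by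
  classical
  have he1 : 1 ≤ e := hre.1
  have hν1 : 1 ≤ ν := hν.2 ⟨one_dvd e, by simp⟩
  have hνe : ν ∣ e := hν.1.1
  have hν0 : ν ≠ 0 := by omega
  have hu1 : u ≠ 1 := fun h => hw (by rw [hre.2.1, h, one_pow])
  ext x
  simp only [GPClosure, Set.mem_setOf_eq, SetLike.mem_coe]
  constructor
  · -- hard direction
    intro hx
    obtain ⟨p0, hp0⟩ := hPne
    have hp0p := hPp p0 hp0
    -- Step 1: x commutes with w
    have hcomm : x * w = w * x := by
      by_contra hne
      have hc1 : x * w * x⁻¹ * w⁻¹ ≠ 1 := by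
        intro h
        apply hne
        have h2 : x * w * x⁻¹ = w := mul_inv_eq_one.mp h
        have h3 := congrArg (· * x) h2
        simpa [inv_mul_cancel_right] using h3
      obtain ⟨K, _, _, φ, hK, hφc⟩ := residually_p p0 hp0p _ hc1
      have hval := hx K φ (fun q hq hd => (hK q hq hd) ▸ hp0)
      rw [MonoidHom.map_zpowers] at hval
      obtain ⟨tt, htt⟩ := Subgroup.mem_zpowers_iff.mp hval
      apply hφc
      simp only [_root_.map_mul, _root_.map_inv]
      rw [← htt]
      group
    have hxu : x ∈ Subgroup.zpowers u := commute_mem_zpowers_root hw hre hcomm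
    obtain ⟨kk, hkk⟩ := Subgroup.mem_zpowers_iff.mp hxu
    -- Step 2: ν divides kk
    have hdvd : (ν : ℤ) ∣ kk := by
      by_contra hnd
      have hkk0 : kk ≠ 0 := fun h => hnd (by rw [h]; exact dvd_zero _)
      set K0 := kk.natAbs with hK0
      have hK0ne : K0 ≠ 0 := Int.natAbs_ne_zero.mpr hkk0
      have hnd' : ¬ (ν ∣ K0) := by
        intro h
        exact hnd (Int.natAbs_dvd_natAbs.mp (by rwa [Int.natAbs_natCast]))
      have hfac : ¬ (ν.factorization ≤ K0.factorization) := by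
        intro h
        exact hnd' ((Nat.factorization_le_iff_dvd hν0 hK0ne).mp h)
      rw [Finsupp.le_def] at hfac
      push_neg at hfac
      obtain ⟨q, hq⟩ := hfac
      set a := ν.factorization q with ha
      have ha1 : 1 ≤ a := by omega
      have hqsupp : q ∈ ν.primeFactors := by
        rw [← Nat.support_factorization]
        exact Finsupp.mem_support_iff.mpr (by omega)
      have hqprime : q.Prime := Nat.prime_of_mem_primeFactors hqsupp
      have hqP : q ∈ P := hν.1.2 q hqsupp
      have hqaν : q ^ a ∣ ν := Nat.ordProj_dvd ν q
      have hqae : q ^ a ∣ e := hqaν.trans hνe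
      have hqak : ¬ (q ^ a ∣ K0) := by
        intro h
        have := (Nat.Prime.pow_dvd_iff_le_factorization hqprime hK0ne).mp h
        omega
      have hupow : u ^ (q ^ a) ≠ 1 := fg_pow_ne_one hu1 (pow_ne_zero a hqprime.pos.ne')
      obtain ⟨K, _, _, φ, hK, hφ⟩ := residually_p q hqprime _ hupow
      have hval := hx K φ (fun r hr hd => (hK r hr hd) ▸ hqP)
      rw [MonoidHom.map_zpowers] at hval
      rw [← hkk, _root_.map_zpow] at hval
      obtain ⟨tt, htt⟩ := Subgroup.mem_zpowers_iff.mp hval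
      set g := φ u with hg
      set o := orderOf g with ho
      have hgq : g ^ (q ^ a) ≠ 1 := by rw [hg, ← _root_.map_pow]; exact hφ
      have hodvd : ¬ o ∣ q ^ a := fun h => hgq (orderOf_dvd_iff_pow_eq_one.mp h)
      have ho0 : o ≠ 0 := (orderOf_pos g).ne'
      have hoq : ∀ r, r.Prime → r ∣ o → r = q := fun r hr hrd =>
        hK r hr (hrd.trans (orderOf_dvd_natCard g))
      have hopow : o = q ^ o.primeFactorsList.length :=
        Nat.eq_prime_pow_of_unique_prime_dvd ho0 (fun {d} hd hdvd => hoq d hd hdvd)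
      set j := o.primeFactorsList.length with hj
      have hja : a ≤ j := by
        by_contra hja
        push_neg at hja
        exact hodvd (by rw [hopow]; exact pow_dvd_pow q (by omega))
      have hqao : (q : ℤ) ^ a ∣ (o : ℤ) := by
        have h5 : q ^ a ∣ o := by rw [hopow]; exact pow_dvd_pow q hja
        exact_mod_cast Int.natCast_dvd_natCast.mpr h5
      have hφw : φ w = g ^ e := by rw [hre.2.1, _root_.map_pow]
      have hzpow : g ^ ((e : ℤ) * tt - kk) = 1 := by
        rw [zpow_sub, zpow_mul, zpow_natCast, ← hφw, htt]
        simp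
      have hdvd2 : (o : ℤ) ∣ ((e : ℤ) * tt - kk) := orderOf_dvd_iff_zpow_eq_one.mpr hzpow
      have hqdvd : (q : ℤ) ^ a ∣ kk := by
        have h1 : (q : ℤ) ^ a ∣ (e : ℤ) * tt := by
          apply Dvd.dvd.mul_right
          exact_mod_cast Int.natCast_dvd_natCast.mpr hqae
        have h2 : (q : ℤ) ^ a ∣ ((e : ℤ) * tt - kk) := hqao.trans hdvd2
        have h3 := dvd_sub h1 h2
        simpa using h3
      apply hqak
      have h6 := Int.natAbs_dvd_natAbs.mpr hqdvd
      rw [Int.natAbs_pow, Int.natAbs_natCast] at h6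
      exact h6
    obtain ⟨tt, htt⟩ := hdvd
    rw [Subgroup.mem_zpowers_iff]
    refine ⟨tt, ?_⟩
    rw [← hkk, htt, ← zpow_natCast u ν, ← zpow_mul]
  · -- easy direction
    intro hxmem
    intro K _ _ φ hK
    rw [MonoidHom.map_zpowers]
    obtain ⟨ss, hss⟩ := Subgroup.mem_zpowers_iff.mp hxmem
    have ho0 : orderOf (φ u) ≠ 0 := (orderOf_pos (φ u)).ne'
    obtain ⟨mm, hm⟩ : ∃ mm, ν * mm = e := ⟨e / ν, Nat.mul_div_cancel' hνe⟩
    have hmm0 : mm ≠ 0 := by intro h; rw [h, mul_zero] at hm; omega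
    have hcop : Nat.Coprime mm (orderOf (φ u)) := by
      by_contra hnc
      obtain ⟨r, hr, hrd⟩ := Nat.exists_prime_and_dvd (fun h => hnc h)
      have hrm : r ∣ mm := hrd.trans (Nat.gcd_dvd_left _ _)
      have hro : r ∣ orderOf (φ u) := hrd.trans (Nat.gcd_dvd_right _ _)
      have hrP : r ∈ P := hK r hr (hro.trans (orderOf_dvd_natCard (φ u)))
      have hmem2 : ν * r ∈ {d : ℕ | d ∣ e ∧ ∀ q ∈ d.primeFactors, q ∈ P} := by
        constructor
        · rw [← hm]; exact mul_dvd_mul_left ν hrm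
        · intro q hq
          rw [Nat.primeFactors_mul hν0 hr.pos.ne'] at hq
          rcases Finset.mem_union.mp hq with h | h
          · exact hν.1.2 q h
          · rw [Nat.Prime.primeFactors hr] at h
            rw [Finset.mem_singleton.mp h]
            exact hrP
      have h7 := hν.2 hmem2
      have h8 : ν * 2 ≤ ν * r := Nat.mul_le_mul_left ν hr.two_le
      omega
    have hot : 1 ≤ (orderOf (φ u)).totient := Nat.totient_pos.mpr (Nat.pos_of_ne_zero ho0)
    have hkey : φ u ^ (e * mm ^ ((orderOf (φ u)).totient - 1)) = φ u ^ ν := by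
      rw [pow_eq_pow_iff_modEq]
      calc e * mm ^ ((orderOf (φ u)).totient - 1)
          = ν * (mm * mm ^ ((orderOf (φ u)).totient - 1)) := by rw [← hm]; ring
        _ ≡ ν * 1 [MOD orderOf (φ u)] := Nat.ModEq.mul_left ν (by
            rw [← pow_succ']
            rw [show (orderOf (φ u)).totient - 1 + 1 = (orderOf (φ u)).totient by omega]
            exact Nat.ModEq.pow_totient hcop)
        _ = ν := by rw [mul_one]
    rw [Subgroup.mem_zpowers_iff]
    refine ⟨((mm ^ ((orderOf (φ u)).totient - 1) : ℕ) : ℤ) * ss, ?_⟩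
    rw [← hss, _root_.map_zpow, _root_.map_pow, hre.2.1, _root_.map_pow]
    rw [zpow_mul, zpow_natCast, ← pow_mul, hkey]
end

section
/- With F_n free of rank n, p prime, K_n the kernel of the natural map F_n → C_{p−1}^n, and w ∈ K_n nontrivial with root u and exponent e in F_n: the root of w in K_n is u^{h_u} and the exponent of w in K_n is e/h_u, where h_u = (p−1)/gcd(p−1, f_{a_1}(u), …, f_{a_n}(u)). -/
/-- The exponent-sum homomorphism `f_{a_i}` of the free group of rank `n`,
evaluated at `w`: the image of `w` under the homomorphism sending `a_i` to `1`
and the other generators to `0`. -/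
def expSum {n : ℕ} (i : Fin n) (w : FreeGroup (Fin n)) : ℤ :=
  Multiplicative.toAdd
    (FreeGroup.lift (fun j => Multiplicative.ofAdd (if j = i then (1 : ℤ) else 0)) w)

/-- `h_w = (p-1)/gcd(p-1, f_{a_1}(w), …, f_{a_n}(w))`. -/
def hval (p : ℕ) {n : ℕ} (w : FreeGroup (Fin n)) : ℕ :=
  (p - 1) / Nat.gcd (p - 1) (Finset.univ.gcd fun i => (expSum i w).natAbs)

/-- The natural map `F_n → C_{p-1}^n` sending each generator to the corresponding
standard generator. -/
def toAb (p n : ℕ) : FreeGroup (Fin n) →* (Fin n → Multiplicative (ZMod (p - 1))) :=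
  FreeGroup.lift (fun i j => if j = i then Multiplicative.ofAdd (1 : ZMod (p - 1)) else 1)



set_option linter.unusedSectionVars false
namespace FGRoot
open List FreeGroup

variable {α : Type} [DecidableEq α]

/-- repeated concatenation -/
def lpow (L : List (α × Bool)) : ℕ → List (α × Bool)
  | 0 => []
  | n+1 => L ++ lpow L n

@[simp] lemma lpow_zero (L : List (α × Bool)) : lpow L 0 = [] := rfl
@[simp] lemma lpow_succ (L : List (α × Bool)) (n : ℕ) : lpow L (n+1) = L ++ lpow L n := rfl

lemma lpow_comm (L : List (α × Bool)) (n : ℕ) : L ++ lpow L n = lpow L n ++ L := by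
  induction n with
  | zero => simp
  | succ n ih => rw [lpow_succ, List.append_assoc, ih, ← List.append_assoc]

lemma lpow_succ' (L : List (α × Bool)) (n : ℕ) : lpow L (n+1) = lpow L n ++ L := by
  rw [lpow_succ, lpow_comm]

lemma lpow_add (L : List (α × Bool)) (a b : ℕ) : lpow L (a+b) = lpow L a ++ lpow L b := by
  induction a with
  | zero => simp
  | succ a ih => rw [Nat.succ_add, lpow_succ, lpow_succ, ih, List.append_assoc]

@[simp] lemma length_lpow (L : List (α × Bool)) (n : ℕ) : (lpow L n).length = n * L.length := by
  induction n with
  | zero => simp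
  | succ n ih => simp [ih, Nat.succ_mul, Nat.add_comm]

@[simp] lemma lpow_nil (n : ℕ) : lpow ([] : List (α × Bool)) n = [] := by
  induction n with
  | zero => rfl
  | succ n ih => simp [ih]

lemma lpow_one (L : List (α × Bool)) : lpow L 1 = L := by simp

lemma prefix_lpow (L : List (α × Bool)) {a : ℕ} (ha : 1 ≤ a) : L <+: lpow L a := by
  obtain ⟨b, rfl⟩ := Nat.exists_eq_add_of_le ha
  rw [Nat.add_comm, lpow_succ]; exact List.prefix_append L _

lemma mk_lpow (L : List (α × Bool)) (n : ℕ) : FreeGroup.mk (lpow L n) = (FreeGroup.mk L) ^ n := by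
  rw [FreeGroup.pow_mk]
  congr 1
  induction n with
  | zero => simp
  | succ n ih => simp [ih, List.replicate_succ]

lemma rot (A C : List (α × Bool)) (b : ℕ) : lpow (A ++ C) b ++ A = A ++ lpow (C ++ A) b := by
  induction b with
  | zero => simp
  | succ b ih =>
      rw [lpow_succ, List.append_assoc, ih, lpow_succ]
      simp [List.append_assoc]

lemma ls_comm_aux {A B : List (α × Bool)} {a b : ℕ} (ha : 1 ≤ a) (hb : 1 ≤ b)
    (hlen : A.length ≤ B.length) (h : lpow A a = lpow B b) : A ++ B = B ++ A := by
  have hA : A <+: lpow A a := prefix_lpow A ha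
  have hB : B <+: lpow A a := h ▸ prefix_lpow B hb
  obtain ⟨C, rfl⟩ := List.prefix_of_prefix_length_le hA hB hlen
  -- goal : A ++ (A ++ C) = (A ++ C) ++ A
  have key : lpow (A ++ C) b = lpow (C ++ A) b := by
    have h1 : A ++ lpow A a = lpow A a ++ A := by
      rw [← lpow_succ, lpow_succ']
    have h2 : lpow (A ++ C) b ++ A = A ++ lpow (C ++ A) b := rot A C b
    rw [← h, ← h1] at h2
    rw [← h]
    exact List.append_cancel_left h2
  have hac : (A ++ C) <+: lpow (A ++ C) b := prefix_lpow _ hb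
  have hca : (C ++ A) <+: lpow (A ++ C) b := key ▸ prefix_lpow _ hb
  have : (A ++ C) = (C ++ A) :=
    List.IsPrefix.eq_of_length
      (List.prefix_of_prefix_length_le hac hca (by simp [Nat.add_comm]))
      (by simp [Nat.add_comm])
  rw [List.append_assoc, this]

lemma ls_comm {A B : List (α × Bool)} {a b : ℕ} (ha : 1 ≤ a) (hb : 1 ≤ b)
    (h : lpow A a = lpow B b) : A ++ B = B ++ A := by
  rcases le_total A.length B.length with hl | hl
  · exact ls_comm_aux ha hb hl h
  · exact (ls_comm_aux hb ha hl h.symm).symm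

lemma comm_root : ∀ N (A B : List (α × Bool)), A.length + B.length ≤ N →
    A ++ B = B ++ A → ∃ (T : List (α × Bool)) (i j : ℕ), A = lpow T i ∧ B = lpow T j := by
  intro N
  induction N with
  | zero =>
      intro A B hlen _
      have : A = [] ∧ B = [] := by
        constructor <;> (apply List.eq_nil_of_length_eq_zero; omega)
      exact ⟨[], 0, 0, by simp [this.1, this.2]⟩
  | succ N ih =>
      intro A B hlen hcomm
      rcases eq_or_ne A [] with rfl | hA
      · exact ⟨B, 0, 1, by simp [lpow_one]⟩
      rcases eq_or_ne B [] with rfl | hB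
      · exact ⟨A, 1, 0, by simp [lpow_one]⟩
      rcases le_total A.length B.length with hl | hl
      · have hAB : A <+: B := by
          have h1 : A <+: B ++ A := hcomm ▸ List.prefix_append A B
          exact List.prefix_of_prefix_length_le h1 (List.prefix_append B A) hl
        obtain ⟨C, rfl⟩ := hAB
        have hcomm' : A ++ C = C ++ A := by
          apply List.append_cancel_left (as := A)
          simpa [List.append_assoc] using hcomm
        have hlen' : A.length + C.length ≤ N := by
          have : 0 < A.length := List.length_pos_iff.mpr hA
          simp only [List.length_append] at hlen ⊢
          omega
        obtain ⟨T, i, j, hA', hC'⟩ := ih A C hlen' hcomm'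
        exact ⟨T, i, i + j, hA', by rw [lpow_add, hA', hC']⟩
      · have hAB : B <+: A := by
          have h1 : B <+: A ++ B := hcomm ▸ List.prefix_append B A
          exact List.prefix_of_prefix_length_le h1 (List.prefix_append A B) hl
        obtain ⟨C, rfl⟩ := hAB
        have hcomm' : B ++ C = C ++ B := by
          apply List.append_cancel_left (as := B)
          simpa [List.append_assoc] using hcomm.symm
        have hlen' : B.length + C.length ≤ N := by
          have : 0 < B.length := List.length_pos_iff.mpr hB
          simp only [List.length_append] at hlen ⊢
          omega
        obtain ⟨T, i, j, hB', hC'⟩ := ih B C hlen' hcomm'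
        exact ⟨T, i + j, i, by rw [lpow_add, hB', hC'], hB'⟩


/-- no-cancellation relation between adjacent letters -/
def P (a b : α × Bool) : Prop := ¬(b.1 = a.1 ∧ b.2 = !a.2)

lemma chainP_reduce (L : List (α × Bool)) : Chain' P (reduce L) := by
  by_contra hc
  simp only [List.Chain'] at hc
  rw [List.isChain_iff_getElem] at hc
  push_neg at hc
  obtain ⟨i, hi, hbad⟩ := hc
  unfold P at hbad
  rw [not_not] at hbad
  set R := reduce L with hR
  have hi1 : i + 1 < R.length := by omega
  have hi0 : i < R.length := by omega
  have hsplit : R = R.take i ++ (R[i].1, R[i].2) :: (R[i].1, !R[i].2) :: R.drop (i+2) := by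
    conv_lhs => rw [← List.take_append_drop i R]
    congr 1
    rw [List.drop_eq_getElem_cons hi0, List.drop_eq_getElem_cons hi1]
    congr 1
    rw [← hbad.2, ← hbad.1]
  have hRR : reduce R = R := by rw [hR]; exact FreeGroup.reduce.idem
  have : reduce R = R.take i ++ (R[i].1, R[i].2) :: (R[i].1, !R[i].2) :: R.drop (i+2) := by
    rw [hRR, ← hsplit]
  exact FreeGroup.reduce.not this

lemma chainP_toWord (x : FreeGroup α) : Chain' P (toWord x) := by
  rw [← FreeGroup.reduce_toWord]
  exact chainP_reduce _

lemma reduce_eq_self_of_chain : ∀ {L : List (α × Bool)}, Chain' P L → reduce L = L := by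
  intro L
  induction L with
  | nil => intro _; rfl
  | cons a L ih =>
      intro h
      rw [FreeGroup.reduce.cons, ih h.tail]
      cases L with
      | nil => rfl
      | cons hd tl =>
          have hP : P a hd := (List.isChain_cons_cons.mp h).1
          dsimp only
          rw [if_neg]
          intro ⟨h1, h2⟩
          exact hP ⟨h1.symm, by rw [h2, Bool.not_not]⟩

lemma head?_lpow {L : List (α × Bool)} (hL : L ≠ []) (n : ℕ) :
    (lpow L (n+1)).head? = L.head? := by
  rw [lpow_succ, List.head?_append_of_ne_nil _ hL]

lemma getLast?_lpow {L : List (α × Bool)} (hL : L ≠ []) (n : ℕ) :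
    (lpow L (n+1)).getLast? = L.getLast? := by
  rw [lpow_succ', List.getLast?_append_of_ne_nil _ hL]

lemma chain'_lpow {L : List (α × Bool)} (h : Chain' P (L ++ L)) (n : ℕ) :
    Chain' P (lpow L n) := by
  rcases eq_or_ne L [] with rfl | hL
  · simp [List.Chain']
  obtain ⟨hc, -, hj⟩ := List.isChain_append.mp h
  induction n with
  | zero => simp [List.Chain']
  | succ n ih =>
      rw [lpow_succ]
      refine List.isChain_append.mpr ⟨hc, ih, ?_⟩
      intro x hx y hy
      cases n with
      | zero => simp at hy
      | succ m =>
          rw [head?_lpow hL] at hy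
          exact hj x hx y hy

lemma toWord_pow_cr {x : FreeGroup α} (h : Chain' P (toWord x ++ toWord x)) (n : ℕ) :
    toWord (x ^ n) = lpow (toWord x) n := by
  conv_lhs => rw [← FreeGroup.mk_toWord (x := x)]
  rw [← mk_lpow, FreeGroup.toWord_mk, reduce_eq_self_of_chain (chain'_lpow h n)]

lemma invRev_cons (a : α × Bool) (L : List (α × Bool)) :
    FreeGroup.invRev (a :: L) = FreeGroup.invRev L ++ [(a.1, !a.2)] := by
  simp [FreeGroup.invRev]


lemma exists_cyc : ∀ (N : ℕ) (x : FreeGroup α), (toWord x).length ≤ N →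
    ∃ G Z, toWord x = G ++ Z ++ FreeGroup.invRev G ∧ Chain' P (Z ++ Z) ∧
      x = FreeGroup.mk G * FreeGroup.mk Z * (FreeGroup.mk G)⁻¹ := by
  intro N
  induction N with
  | zero =>
      intro x hx
      have hnil : toWord x = [] := List.eq_nil_of_length_eq_zero (by omega)
      refine ⟨[], [], by simp [hnil, FreeGroup.invRev], by simp [List.Chain'], ?_⟩
      rw [← FreeGroup.one_eq_mk]
      have : x = 1 := FreeGroup.toWord_eq_nil_iff.mp hnil
      simp [this]
  | succ N ih =>
      intro x hx
      by_cases h : Chain' P (toWord x ++ toWord x)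
      · refine ⟨[], toWord x, by simp [FreeGroup.invRev], h, ?_⟩
        rw [← FreeGroup.one_eq_mk, FreeGroup.mk_toWord]
        simp
      · simp only [List.Chain'] at h
        rw [List.isChain_append] at h
        push_neg at h
        obtain ⟨a, ha, b, hb, hab⟩ := h (chainP_toWord x) (chainP_toWord x)
        unfold P at hab
        rw [not_not] at hab
        rcases hL : toWord x with _ | ⟨c, t⟩
        · rw [hL] at hb; simp at hb
        rw [hL] at ha hb hx
        have hbc : b = c := (by simpa using hb : c = b).symm
        rcases t with _ | ⟨d, t'⟩
        · have : a = c := (by simpa using ha : c = a).symm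
          rw [this, hbc] at hab
          simp at hab
        set t := d :: t' with ht
        have htne : t ≠ [] := by simp [ht]
        have hat : a = t.getLast htne := by
          rw [List.getLast?_eq_getLast (l := c :: t) (by simp), List.getLast_cons htne] at ha
          exact (by simpa using ha : t.getLast htne = a).symm
        have hac : a = (c.1, !c.2) := by
          rw [hbc] at hab
          exact Prod.ext hab.1.symm (by rw [← Bool.not_not a.2, ← hab.2])
        set M := t.dropLast with hM
        have hdecomp : toWord x = c :: (M ++ [a]) := by
          rw [hL, hat, hM, List.dropLast_append_getLast htne]
        have hchainM : Chain' P M := by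
          have h1 : Chain' P (c :: (M ++ [a])) := hdecomp ▸ chainP_toWord x
          exact (List.isChain_append.mp h1.tail).1
        set y := FreeGroup.mk M with hy
        have hyword : toWord y = M := by
          rw [hy, FreeGroup.toWord_mk, reduce_eq_self_of_chain hchainM]
        have hxy : x = FreeGroup.mk [c] * y * (FreeGroup.mk [c])⁻¹ := by
          have hinv : (FreeGroup.mk [c] : FreeGroup α)⁻¹ = FreeGroup.mk [a] := by
            rw [FreeGroup.inv_mk]
            congr 1
            simp [FreeGroup.invRev, hac]
          rw [hinv, hy, FreeGroup.mul_mk, FreeGroup.mul_mk, ← FreeGroup.mk_toWord (x := x),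
            hdecomp]
          norm_num
        have hlen : (toWord y).length ≤ N := by
          rw [hyword]
          have h1 : M.length = t.length - 1 := by simp [hM]
          have h2 : t.length = t'.length + 1 := by simp [ht]
          simp only [List.length_cons] at hx
          omega
        obtain ⟨G', Z, hy1, hy2, hy3⟩ := ih y hlen
        refine ⟨c :: G', Z, ?_, hy2, ?_⟩
        · rw [← hL, hdecomp, invRev_cons, ← hyword, hy1, hac]
          simp
        · have hm : (FreeGroup.mk (c :: G') : FreeGroup α) = FreeGroup.mk [c] * FreeGroup.mk G' :=
            by rw [FreeGroup.mul_mk]; norm_num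
          rw [hxy, hy3, hm]
          group

lemma invRev_ne_nil {D : List (α × Bool)} (h : D ≠ []) : FreeGroup.invRev D ≠ [] := by
  intro h0
  exact h (by simpa [FreeGroup.invRev] using congrArg List.length h0)

lemma root_power {w u v : FreeGroup α} {e r : ℕ} (hw : w ≠ 1) (he : 1 ≤ e) (hr : 1 ≤ r)
    (hwu : w = u ^ e) (hmax : ∀ x s, w = x ^ s → s ≤ e) (hwv : w = v ^ r) :
    ∃ k : ℕ, v = u ^ k ∧ k * r = e := by
  obtain ⟨G, Z, hu1, hu2, hu3⟩ := exists_cyc (toWord u).length u le_rfl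
  set c := FreeGroup.mk G with hc
  set t := FreeGroup.mk Z with ht
  have htword : toWord t = Z := by
    rw [ht, FreeGroup.toWord_mk, reduce_eq_self_of_chain (List.isChain_append.mp hu2).1]
  have hune : u ≠ 1 := fun h => hw (by rw [hwu, h, one_pow])
  have hZne : Z ≠ [] := by
    intro h0
    apply hune
    rw [hu3, ht, h0, ← FreeGroup.one_eq_mk]
    group
  have htpow : ∀ n, toWord (t ^ n) = lpow Z n := by
    intro n
    have := toWord_pow_cr (x := t) (by rw [htword]; exact hu2) n
    rwa [htword] at this
  have hte : t ^ e ≠ 1 := by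
    intro h0
    have h1 : lpow Z e = [] := by rw [← htpow e, h0, FreeGroup.toWord_one]
    have h2 := congrArg List.length h1
    simp at h2
    rcases h2 with h2 | h2
    · omega
    · exact hZne h2
  set v₂ := c⁻¹ * v * c with hv₂
  have hv2r : v₂ ^ r = t ^ e := by
    have h1 : v₂ ^ r = c⁻¹ * v ^ r * c := by
      have := conj_pow (a := c⁻¹) (b := v) (i := r)
      simpa only [inv_inv] using this
    have h2 : u ^ e = c * t ^ e * c⁻¹ := by rw [hu3]; exact conj_pow
    rw [h1, ← hwv, hwu, h2]
    group
  obtain ⟨D, S, hv1, hvS2, hv3⟩ := exists_cyc (toWord v₂).length v₂ le_rfl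
  set d := FreeGroup.mk D with hd
  set s := FreeGroup.mk S with hs
  have hSne : S ≠ [] := by
    intro h0
    apply hte
    rw [← hv2r, hv3, hs, h0, ← FreeGroup.one_eq_mk]
    group
  obtain ⟨r', rfl⟩ : ∃ r', r = r' + 1 := ⟨r - 1, by omega⟩
  have hlpowSne : lpow S (r' + 1) ≠ [] := by
    intro h0
    have h2 := congrArg List.length h0
    simp at h2
    exact hSne h2.1
  have hvchain : Chain' P (D ++ S ++ FreeGroup.invRev D) := by rw [← hv1]; exact chainP_toWord v₂
  obtain ⟨hcDS, hcI, hj2⟩ := List.isChain_append.mp hvchain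
  obtain ⟨hcD, hcS, hj1⟩ := List.isChain_append.mp hcDS
  have hch : Chain' P (D ++ lpow S (r' + 1) ++ FreeGroup.invRev D) := by
    refine List.isChain_append.mpr ⟨?_, hcI, ?_⟩
    · refine List.isChain_append.mpr ⟨hcD, chain'_lpow hvS2 _, ?_⟩
      intro x hx y hy
      rw [head?_lpow hSne] at hy
      exact hj1 x hx y hy
    · intro x hx y hy
      rcases eq_or_ne D [] with rfl | hDne2
      · refine hj2 x ?_ y hy
        simp only [List.nil_append] at hx ⊢
        rwa [getLast?_lpow hSne] at hx
      · rw [List.getLast?_append_of_ne_nil _ hlpowSne, getLast?_lpow hSne] at hx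
        refine hj2 x ?_ y hy
        rw [List.getLast?_append_of_ne_nil _ hSne]
        exact hx
  have hkey : lpow Z e = D ++ lpow S (r' + 1) ++ FreeGroup.invRev D := by
    have h2 : t ^ e = d * s ^ (r' + 1) * d⁻¹ := by
      rw [← hv2r, hv3]
      exact conj_pow
    have h3 : d * s ^ (r' + 1) * d⁻¹ = FreeGroup.mk (D ++ lpow S (r' + 1) ++ FreeGroup.invRev D) := by
      rw [hd, hs, ← mk_lpow, FreeGroup.inv_mk, FreeGroup.mul_mk, FreeGroup.mul_mk]
    calc lpow Z e = toWord (t ^ e) := (htpow e).symm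
      _ = toWord (FreeGroup.mk (D ++ lpow S (r' + 1) ++ FreeGroup.invRev D)) := by rw [h2, h3]
      _ = D ++ lpow S (r' + 1) ++ FreeGroup.invRev D := by
          rw [FreeGroup.toWord_mk, reduce_eq_self_of_chain hch]
  have hD : D = [] := by
    by_contra hDne
    have hWW : Chain' P (lpow Z e ++ lpow Z e) := by
      rw [← lpow_add]; exact chain'_lpow hu2 (e + e)
    have hWne : lpow Z e ≠ [] := by
      rw [hkey]
      intro h0
      simp at h0
      exact hDne h0.1
    obtain ⟨-, -, hj⟩ := List.isChain_append.mp hWW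
    set hd0 := D.head hDne with hhd0
    have hhead : (lpow Z e).head? = some hd0 := by
      rw [hkey, List.append_assoc, List.head?_append_of_ne_nil _ hDne, List.head?_eq_head hDne]
    have hlast : (lpow Z e).getLast? = some (hd0.1, !hd0.2) := by
      rw [hkey, List.getLast?_append_of_ne_nil _ (invRev_ne_nil hDne)]
      rw [FreeGroup.invRev]
      rw [List.getLast?_reverse]
      rw [List.head?_map, List.head?_eq_head hDne]
      rfl
    have := hj _ hlast _ hhead
    unfold P at this
    simp at this
  have hZS : lpow Z e = lpow S (r' + 1) := by
    rw [hkey, hD]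
    simp [FreeGroup.invRev]
  obtain ⟨T, i, j, hZT, hST⟩ := comm_root (Z.length + S.length) Z S le_rfl (ls_comm he hr hZS)
  have hv₂s : v₂ = s := by
    rw [hv3, hd, hD, ← FreeGroup.one_eq_mk]
    group
  have ht_i : t = (FreeGroup.mk T) ^ i := by rw [ht, hZT, mk_lpow]
  have hs_j : s = (FreeGroup.mk T) ^ j := by rw [hs, hST, mk_lpow]
  have hi1 : i = 1 := by
    have hweq : w = (c * FreeGroup.mk T * c⁻¹) ^ (i * e) := by
      rw [hwu, hu3, ht_i, ← conj_pow, ← pow_mul]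
    have hie := hmax _ (i * e) hweq
    have hipos : i ≠ 0 := by
      intro h0
      rw [h0, lpow_zero] at hZT
      exact hZne hZT
    rcases i with - | - | i
    · omega
    · rfl
    · exfalso
      have h9 : (i + 1 + 1) * e ≤ 1 * e := by simpa using hie
      have := Nat.le_of_mul_le_mul_right h9 (by omega : 0 < e)
      omega
  have htT : t = FreeGroup.mk T := by rw [ht_i, hi1, pow_one]
  have hvj : v = u ^ j := by
    have hv : v = c * v₂ * c⁻¹ := by rw [hv₂]; group
    rw [hv, hv₂s, hs_j, ← htT, hu3, conj_pow]
  refine ⟨j, hvj, ?_⟩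
  have hteq : t ^ (j * (r' + 1)) = t ^ e := by
    have h5 : u ^ (j * (r' + 1)) = u ^ e := by
      rw [← hwu, hwv, hvj, ← pow_mul]
    have h6 : c * t ^ (j * (r' + 1)) * c⁻¹ = c * t ^ e * c⁻¹ := by
      rw [← conj_pow, ← conj_pow, ← hu3]
      exact h5
    exact mul_left_cancel (mul_right_cancel h6)
  have h8 : lpow Z (j * (r' + 1)) = lpow Z e := by rw [← htpow, ← htpow, hteq]
  have h7 := congrArg List.length h8
  simp only [length_lpow] at h7
  exact Nat.eq_of_mul_eq_mul_right (List.length_pos_iff.mpr hZne) h7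

end FGRoot

namespace FGRoot

lemma expSum_pow {n : ℕ} (i : Fin n) (u : FreeGroup (Fin n)) (k : ℕ) :
    expSum i (u ^ k) = k * expSum i u := by
  unfold expSum
  rw [map_pow, toAdd_pow, nsmul_eq_mul]

lemma mem_ker_iff {p n : ℕ} (hp : 1 ≤ p - 1) (x : FreeGroup (Fin n)) :
    x ∈ (toAb p n).ker ↔ ∀ i, ((p - 1 : ℕ) : ℤ) ∣ expSum i x := by
  haveI : NeZero (p - 1) := ⟨by omega⟩
  have key : ∀ i : Fin n,
      toAb p n x i = Multiplicative.ofAdd ((expSum i x : ZMod (p - 1))) := by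
    intro i
    set φ₁ : FreeGroup (Fin n) →* Multiplicative (ZMod (p-1)) :=
      (Pi.evalMonoidHom (fun _ => Multiplicative (ZMod (p-1))) i).comp (toAb p n) with hφ₁
    set ψ : Multiplicative ℤ →* Multiplicative (ZMod (p-1)) :=
      AddMonoidHom.toMultiplicative (Int.castAddHom (ZMod (p-1))) with hψ
    set φ₂ := ψ.comp
      (FreeGroup.lift (fun j => Multiplicative.ofAdd (if j = i then (1:ℤ) else 0))) with hφ₂
    have heq : φ₁ = φ₂ := by
      apply FreeGroup.ext_hom
      intro a
      rw [hφ₁, hφ₂]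
      simp only [MonoidHom.comp_apply, Pi.evalMonoidHom_apply, toAb, FreeGroup.lift_apply_of]
      by_cases h : a = i
      · subst h
        simp [hψ]
      · rw [if_neg h, if_neg (Ne.symm h), hψ]
        simp
    have h2 := congrArg (fun f => f x) heq
    simp only [hφ₁, hφ₂, MonoidHom.comp_apply, Pi.evalMonoidHom_apply] at h2
    rw [h2, hψ]
    unfold expSum
    simp
  rw [MonoidHom.mem_ker]
  rw [funext_iff]
  constructor
  · intro h i
    have := h i
    rw [key i, Pi.one_apply] at this
    have h0 : ((expSum i x : ℤ) : ZMod (p-1)) = 0 := by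
      have := congrArg Multiplicative.toAdd this
      simpa using this
    exact (ZMod.intCast_zmod_eq_zero_iff_dvd _ _).mp h0
  · intro h i
    rw [key i, Pi.one_apply]
    have h0 : ((expSum i x : ℤ) : ZMod (p-1)) = 0 :=
      (ZMod.intCast_zmod_eq_zero_iff_dvd _ _).mpr (h i)
    rw [h0]
    rfl

lemma nat_dvd_of_int (m k : ℕ) (s : ℤ) (h : (m:ℤ) ∣ (k:ℤ) * s) : m ∣ k * s.natAbs := by
  have := Int.natAbs_dvd_natAbs.mpr h
  simpa [Int.natAbs_mul] using this

lemma int_dvd_of_nat (m k : ℕ) (s : ℤ) (h : m ∣ k * s.natAbs) : (m:ℤ) ∣ (k:ℤ) * s := by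
  have h1 : (m:ℤ) ∣ (k:ℤ) * (s.natAbs:ℤ) := by exact_mod_cast Int.natCast_dvd_natCast.mpr h
  rcases Int.natAbs_eq s with hs | hs
  · rw [hs] at h1 ⊢
    exact h1
  · rw [hs, mul_neg]
    exact dvd_neg.mpr h1

lemma gcd_combo {n : ℕ} (m k : ℕ) (s : Fin n → ℤ) (hall : ∀ i, (m:ℤ) ∣ (k:ℤ) * s i) :
    m ∣ k * Finset.univ.gcd (fun i => (s i).natAbs) := by
  have h1 : m ∣ Finset.univ.gcd (fun i => k * (s i).natAbs) :=
    Finset.dvd_gcd (fun i _ => nat_dvd_of_int m k (s i) (hall i))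
  rwa [show (Finset.univ.gcd fun i => k * (s i).natAbs)
      = k * Finset.univ.gcd (fun i => (s i).natAbs) by rw [Finset.gcd_mul_left]; simp] at h1

lemma div_gcd_dvd {m g k : ℕ} (hm : m ≠ 0) (h : m ∣ k * g) : m / Nat.gcd m g ∣ k := by
  set d := Nat.gcd m g with hd
  have hdpos : 0 < d := Nat.gcd_pos_of_pos_left _ (by omega)
  have hdm : d ∣ m := Nat.gcd_dvd_left m g
  have hdg : d ∣ g := Nat.gcd_dvd_right m g
  have hco : Nat.Coprime (m / d) (g / d) := Nat.coprime_div_gcd_div_gcd hdpos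
  have h2 : (m / d) * d ∣ (k * (g / d)) * d := by
    rw [Nat.div_mul_cancel hdm, mul_assoc, Nat.div_mul_cancel hdg]
    exact h
  exact hco.dvd_of_dvd_mul_right ((Nat.mul_dvd_mul_iff_right hdpos).mp h2)

end FGRoot

theorem root_exp_in_K (n p : ℕ) (hp : p.Prime) (w u : FreeGroup (Fin n)) (e : ℕ)
    (hw : w ≠ 1) (hre : IsRootExp w u e) (hwK : w ∈ (toAb p n).ker) :
    ∃ (huK : u ^ hval p u ∈ (toAb p n).ker),
      IsRootExp (⟨w, hwK⟩ : (toAb p n).ker) (⟨u ^ hval p u, huK⟩) (e / hval p u) := by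
  obtain ⟨he1, heq, hmax⟩ := hre
  have hm : 1 ≤ p - 1 := by have := hp.two_le; omega
  set m := p - 1 with hmdef
  set g := Finset.univ.gcd (fun i => (expSum i u).natAbs) with hg
  set d := Nat.gcd m g with hd
  have hdm : d ∣ m := Nat.gcd_dvd_left m g
  have hdg : d ∣ g := Nat.gcd_dvd_right m g
  have hdpos : 0 < d := Nat.gcd_pos_of_pos_left _ (by omega)
  have hhval : hval p u = m / d := rfl
  set h := m / d with hh
  have hhpos : 0 < h := Nat.div_pos (Nat.le_of_dvd (by omega) hdm) hdpos
  -- u ^ h is in the kernel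
  have huK : u ^ h ∈ (toAb p n).ker := by
    rw [FGRoot.mem_ker_iff hm]
    intro i
    rw [FGRoot.expSum_pow]
    apply FGRoot.int_dvd_of_nat
    have h1 : g ∣ (expSum i u).natAbs := Finset.gcd_dvd (Finset.mem_univ i)
    have h2 : m = h * d := (Nat.div_mul_cancel hdm).symm
    show m ∣ h * (expSum i u).natAbs
    rw [h2]
    exact Nat.mul_dvd_mul_left h (dvd_trans hdg h1)
  -- h divides e
  have hme : ∀ i, (m:ℤ) ∣ (e:ℤ) * expSum i u := by
    intro i
    have := (FGRoot.mem_ker_iff hm w).mp hwK i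
    rwa [heq, FGRoot.expSum_pow] at this
  have hhe : h ∣ e := FGRoot.div_gcd_dvd (by omega) (FGRoot.gcd_combo m e _ hme)
  have hehpos : 1 ≤ e / h := Nat.one_le_div_iff hhpos |>.mpr (Nat.le_of_dvd (by omega) hhe)
  refine ⟨huK, hehpos, ?_, ?_⟩
  · -- w = (u^h)^(e/h) in the subgroup
    apply Subtype.ext
    show w = (u ^ h) ^ (e / h)
    rw [← pow_mul, Nat.mul_div_cancel' hhe, heq]
  · -- maximality
    rintro ⟨v, hvK⟩ r hvr
    have hwv : w = v ^ r := by
      have := congrArg (Subtype.val) hvr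
      simpa using this
    rcases Nat.eq_zero_or_pos r with rfl | hrpos
    · exact Nat.zero_le _
    obtain ⟨k, hvk, hke⟩ := FGRoot.root_power hw he1 hrpos heq hmax hwv
    have hkK : ∀ i, (m:ℤ) ∣ (k:ℤ) * expSum i u := by
      intro i
      have := (FGRoot.mem_ker_iff hm v).mp hvK i
      rwa [hvk, FGRoot.expSum_pow] at this
    have hhk : h ∣ k := FGRoot.div_gcd_dvd (by omega) (FGRoot.gcd_combo m k _ hkK)
    obtain ⟨k', rfl⟩ := hhk
    have hkpos : 0 < k' := by
      rcases Nat.eq_zero_or_pos k' with rfl | hk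
      · simp at hke; omega
      · exact hk
    rw [← hke, mul_assoc, hhval, Nat.mul_div_cancel_left _ hhpos]
    exact Nat.le_mul_of_pos_left r hkpos
end
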